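/- For every n ≥ 1 and all disjoint subsets A, B of {1,…,n}: #{π ∈ S_n : Ascbottomproper(π) = A and {a−1 : a ∈ adjAsc(π)} = B} = #{M ∈ N_n : Lcr(M) ∖ {i−1 : i ∈ LRcr(M)} = A and {i−1 : i ∈ LRcr(M)} = B}. -/
import Mathlib


/-! ## Permutations of `{1,…,n}` encoded as functions `ℕ → ℕ` (zero outside `[1,n]`). -/

/-- `f` represents a permutation of `{1,…,n}` in one-line notation:
`f j` is the value in position `j` (for `1 ≤ j ≤ n`), and `f` is `0` elsewhere. -/
def IsPermOn (n : ℕ) (f : ℕ → ℕ) : Prop :=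
  Set.BijOn f (Set.Icc 1 n) (Set.Icc 1 n) ∧ ∀ i, i ∉ Set.Icc 1 n → f i = 0

/-- Ascent tops: values `f j` with `2 ≤ j ≤ n` and `f (j-1) < f j`. -/
def permAsc (n : ℕ) (f : ℕ → ℕ) : Set ℕ :=
  {v | ∃ j, 2 ≤ j ∧ j ≤ n ∧ f (j - 1) < f j ∧ v = f j}

/-- Short ascents (adjacencies): ascent tops with `f (j-1) + 1 = f j`. -/
def permAdjAsc (n : ℕ) (f : ℕ → ℕ) : Set ℕ :=
  {v | ∃ j, 2 ≤ j ∧ j ≤ n ∧ f (j - 1) + 1 = f j ∧ v = f j}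

/-- Occurrences of the pattern `P`: ascent tops `f j` such that the value
`f j - 1` occurs in a position greater than `j`. -/
def permP (n : ℕ) (f : ℕ → ℕ) : Set ℕ :=
  {v | ∃ j, 2 ≤ j ∧ j ≤ n ∧ f (j - 1) < f j ∧ v = f j ∧
    ∃ k, j < k ∧ k ≤ n ∧ f k = f j - 1}

/-- Occurrences of the pattern `Q`: ascent tops `f j` such that the value
`f j - 1` occurs in a position less than `j - 1`. -/
def permQ (n : ℕ) (f : ℕ → ℕ) : Set ℕ :=
  {v | ∃ j, 2 ≤ j ∧ j ≤ n ∧ f (j - 1) < f j ∧ v = f j ∧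
    ∃ k, 1 ≤ k ∧ k + 1 < j ∧ f k = f j - 1}

/-- Silly ascents: `(Asc(π) ∪ {π 1}) \ {n}`. -/
def permAscSilly (n : ℕ) (f : ℕ → ℕ) : Set ℕ :=
  (permAsc n f ∪ {f 1}) \ {n}

/-- Occurrences of the silly pattern `P`: silly ascents `a` such that the value
`a + 1` occurs to the left of the value `a`. -/
def permPSilly (n : ℕ) (f : ℕ → ℕ) : Set ℕ :=
  {a | a ∈ permAscSilly n f ∧ ∃ j k, 1 ≤ j ∧ j < k ∧ k ≤ n ∧ f j = a + 1 ∧ f k = a}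

/-- Occurrences of the silly pattern `Q`: silly ascents `a` such that the value
`a + 1` occurs to the right of the value `a`. -/
def permQSilly (n : ℕ) (f : ℕ → ℕ) : Set ℕ :=
  {a | a ∈ permAscSilly n f ∧ ∃ j k, 1 ≤ j ∧ j < k ∧ k ≤ n ∧ f j = a ∧ f k = a + 1}

/-- Right minima: values having no smaller value to their right. -/
def permRmin (n : ℕ) (f : ℕ → ℕ) : Set ℕ :=
  {v | ∃ j, 1 ≤ j ∧ j ≤ n ∧ v = f j ∧ ∀ k, j < k → k ≤ n → f j < f k}

/-- Right maxima: values having no larger value to their right. -/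
def permRmax (n : ℕ) (f : ℕ → ℕ) : Set ℕ :=
  {v | ∃ j, 1 ≤ j ∧ j ≤ n ∧ v = f j ∧ ∀ k, j < k → k ≤ n → f k < f j}

/-- The number of components of the finest decomposition of a permutation into
direct sums: the number of `k ∈ [1,n]` such that `f` maps `{1,…,k}` into itself. -/
noncomputable def permComp (n : ℕ) (f : ℕ → ℕ) : ℕ :=
  Set.ncard {k | 1 ≤ k ∧ k ≤ n ∧ ∀ i, 1 ≤ i → i ≤ k → f i ≤ k}

/-- The number of descents. -/
noncomputable def permDes (n : ℕ) (f : ℕ → ℕ) : ℕ :=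
  Set.ncard {j | 2 ≤ j ∧ j ≤ n ∧ f j < f (j - 1)}

/-- Ascent bottoms: values `f j` with `1 ≤ j < n` and `f j < f (j+1)`. -/
def permAscBottom (n : ℕ) (f : ℕ → ℕ) : Set ℕ :=
  {v | ∃ j, 1 ≤ j ∧ j + 1 ≤ n ∧ f j < f (j + 1) ∧ v = f j}

/-- Long ascent bottoms: values `f j` with `1 ≤ j < n` and `f j < f (j+1) - 1`. -/
def permAscBottomProper (n : ℕ) (f : ℕ → ℕ) : Set ℕ :=
  {v | ∃ j, 1 ≤ j ∧ j + 1 ≤ n ∧ f j + 1 < f (j + 1) ∧ v = f j}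

/-! ## Matchings on `{1,…,2n}`.

The arcs are indexed `1,…,n` in increasing order of their closers; `opener i`
and `closer i` are the endpoints of the `i`-th arc (and `0` outside `[1,n]`). -/

structure Matching (n : ℕ) where
  opener : ℕ → ℕ
  closer : ℕ → ℕ
  opener_lt_closer : ∀ i, 1 ≤ i → i ≤ n → opener i < closer i
  closer_mono : ∀ i j, 1 ≤ i → i < j → j ≤ n → closer i < closer j
  opener_mem : ∀ i, 1 ≤ i → i ≤ n → opener i ∈ Set.Icc 1 (2 * n)
  closer_mem : ∀ i, 1 ≤ i → i ≤ n → closer i ∈ Set.Icc 1 (2 * n)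
  opener_inj : ∀ i j, 1 ≤ i → i ≤ n → 1 ≤ j → j ≤ n → opener i = opener j → i = j
  opener_ne_closer : ∀ i j, 1 ≤ i → i ≤ n → 1 ≤ j → j ≤ n → opener i ≠ closer j
  cover : ∀ m ∈ Set.Icc 1 (2 * n), ∃ i, 1 ≤ i ∧ i ≤ n ∧ (opener i = m ∨ closer i = m)
  opener_eq_zero : ∀ i, i ∉ Set.Icc 1 n → opener i = 0
  closer_eq_zero : ∀ i, i ∉ Set.Icc 1 n → closer i = 0

namespace Matching

variable {n : ℕ}

/-- No left nesting: no pair of arcs `A, B` with `opener A = opener B + 1`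
and `closer A < closer B`. -/
def NoLeftNesting (M : Matching n) : Prop :=
  ∀ i j, 1 ≤ i → i ≤ n → 1 ≤ j → j ≤ n →
    ¬(M.opener i = M.opener j + 1 ∧ M.closer i < M.closer j)

/-- Right nestings, indexed by the arc with the larger closer. -/
def RneSet (M : Matching n) : Set ℕ :=
  {i | 2 ≤ i ∧ i ≤ n ∧ M.opener i < M.opener (i - 1) ∧ M.closer i = M.closer (i - 1) + 1}

/-- Right crossings, indexed by the arc with the larger closer. -/
def RcrSet (M : Matching n) : Set ℕ :=
  {i | 2 ≤ i ∧ i ≤ n ∧ M.opener (i - 1) < M.opener i ∧ M.opener i < M.closer (i - 1) ∧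
    M.closer i = M.closer (i - 1) + 1}

/-- Double crossings (both left and right crossings), indexed by the right arc. -/
def LRcrSet (M : Matching n) : Set ℕ :=
  {i | i ∈ M.RcrSet ∧ M.opener i = M.opener (i - 1) + 1}

/-- Right single crossings. -/
def RcrpSet (M : Matching n) : Set ℕ := M.RcrSet \ M.LRcrSet

/-- Right adjacencies, indexed by the arc with the larger closer. -/
def RadjSet (M : Matching n) : Set ℕ :=
  {i | 2 ≤ i ∧ i ≤ n ∧ M.closer i = M.closer (i - 1) + 1}

/-- Left crossings, indexed by the arc with the smaller opener. -/
def LcrSet (M : Matching n) : Set ℕ :=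
  {i | 1 ≤ i ∧ i ≤ n ∧ ∃ j, 1 ≤ j ∧ j ≤ n ∧ M.opener j = M.opener i + 1 ∧
    M.opener j < M.closer i ∧ M.closer i < M.closer j}

/-- `Min(M)`: arcs whose opener lies to the left of the first closer. -/
def MinSet (M : Matching n) : Set ℕ :=
  {i | 1 ≤ i ∧ i ≤ n ∧ M.opener i < M.closer 1}

/-- The number of components of the finest decomposition of `M` into direct sums:
the number of `k ∈ [1,n]` such that `{1,…,2k}` is a union of arcs. -/
noncomputable def comp (M : Matching n) : ℕ :=
  Set.ncard {k | 1 ≤ k ∧ k ≤ n ∧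
    ∀ i, 1 ≤ i → i ≤ n → (M.closer i ≤ 2 * k ∨ 2 * k < M.opener i)}

/-- `S` is the direct sum of `M` (size `n₁`) and `M'` (size `n₂`): the diagrams
side by side, the elements of `M'` shifted by `2 n₁`. -/
def IsDsum {n₁ n₂ m : ℕ} (M : Matching n₁) (M' : Matching n₂) (S : Matching m) : Prop :=
  m = n₁ + n₂ ∧
  (∀ i, 1 ≤ i → i ≤ n₁ → S.opener i = M.opener i ∧ S.closer i = M.closer i) ∧
  (∀ i, 1 ≤ i → i ≤ n₂ → S.opener (n₁ + i) = M'.opener i + 2 * n₁ ∧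
    S.closer (n₁ + i) = M'.closer i + 2 * n₁)

end Matching

/-! ## 0-1-fillings of partition shapes.

The shape has `len ≥ 1` columns; column `i` (for `1 ≤ i ≤ len`) has height
`shape i ≥ 1`, weakly increasing from left to right (and `shape i = 0` outside
`[1, len]`).  The dots are the cells holding a `1`. -/

structure Filling where
  len : ℕ
  shape : ℕ → ℕ
  dots : Set (ℕ × ℕ)
  len_pos : 1 ≤ len
  shape_pos : ∀ i, 1 ≤ i → i ≤ len → 1 ≤ shape i
  shape_mono : ∀ i j, 1 ≤ i → i ≤ j → j ≤ len → shape i ≤ shape j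
  shape_eq_zero : ∀ i, i ∉ Set.Icc 1 len → shape i = 0
  dots_mem : ∀ p ∈ dots, 1 ≤ p.1 ∧ p.1 ≤ len ∧ 1 ≤ p.2 ∧ p.2 ≤ shape p.1

namespace Filling

/-- The number of dots of a filling. -/
noncomputable def nDots (T : Filling) : ℕ := Set.ncard T.dots

/-- Every column contains exactly one dot. -/
def ColumnStrict (T : Filling) : Prop :=
  ∀ i, 1 ≤ i → i ≤ T.len → ∃! j, (i, j) ∈ T.dots

/-- Every column contains at least one dot. -/
def ColumnPositive (T : Filling) : Prop :=
  ∀ i, 1 ≤ i → i ≤ T.len → ∃ j, (i, j) ∈ T.dots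

/-- The length of row `j`: the number of columns of height at least `j`. -/
noncomputable def rowLen (T : Filling) (j : ℕ) : ℕ :=
  Set.ncard {i | 1 ≤ i ∧ i ≤ T.len ∧ j ≤ T.shape i}

/-- A shape is flat if its nonempty rows have pairwise distinct lengths. -/
def Flat (T : Filling) : Prop :=
  ∀ j j', 1 ≤ j → 1 ≤ j' → j ≠ j' → 1 ≤ T.rowLen j → 1 ≤ T.rowLen j' →
    T.rowLen j ≠ T.rowLen j'

/-- A staircase shape: `shape = (1, 2, …, len)`. -/
def Staircase (T : Filling) : Prop :=
  ∀ i, 1 ≤ i → i ≤ T.len → T.shape i = i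

/-- The lazy set `X(T)`: columns having the same height as their left neighbour. -/
def lazySet (T : Filling) : Set ℕ :=
  {i | 2 ≤ i ∧ i ≤ T.len ∧ T.shape (i - 1) = T.shape i}

/-- Descents of a column-strict filling: columns whose dot is strictly lower
than the dot of the previous column. -/
def DesSet (T : Filling) : Set ℕ :=
  {i | 2 ≤ i ∧ i ≤ T.len ∧ ∃ j j', (i - 1, j) ∈ T.dots ∧ (i, j') ∈ T.dots ∧ j' < j}

/-- Ascents of a column-strict filling. -/
def AscSet (T : Filling) : Set ℕ :=
  {i | 2 ≤ i ∧ i ≤ T.len ∧ ∃ j j', (i - 1, j) ∈ T.dots ∧ (i, j') ∈ T.dots ∧ j < j'}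

/-- Repetitions of a column-strict filling. -/
def RepSet (T : Filling) : Set ℕ :=
  {i | 2 ≤ i ∧ i ≤ T.len ∧ ∃ j, (i - 1, j) ∈ T.dots ∧ (i, j) ∈ T.dots}

/-- Columns with a dot in their topmost cell. -/
def MaxSet (T : Filling) : Set ℕ :=
  {i | 1 ≤ i ∧ i ≤ T.len ∧ (i, T.shape i) ∈ T.dots}

/-- Columns with a dot on the bottom row. -/
def MinSet (T : Filling) : Set ℕ :=
  {i | 1 ≤ i ∧ i ≤ T.len ∧ (i, 1) ∈ T.dots}

/-- For a column-strict filling: columns whose dot is strictly closer to the top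
of its column than is any dot strictly to the right. -/
def RmaxColSet (T : Filling) : Set ℕ :=
  {i | ∃ j, (i, j) ∈ T.dots ∧
    ∀ i' j', (i', j') ∈ T.dots → i < i' → T.shape i - j < T.shape i' - j'}

/-- `rmax(T)`: the number of dots strictly closer to the top of their column
than is any dot strictly to the right. -/
noncomputable def rmaxDots (T : Filling) : ℕ :=
  Set.ncard {p | p ∈ T.dots ∧
    ∀ q ∈ T.dots, p.1 < q.1 → T.shape p.1 - p.2 < T.shape q.1 - q.2}

/-- `lmin(T)`: the number of dots strictly to the left of any dot strictly below. -/
noncomputable def lminDots (T : Filling) : ℕ :=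
  Set.ncard {p | p ∈ T.dots ∧ ∀ q ∈ T.dots, q.2 < p.2 → p.1 < q.1}

/-- The number of components of the finest decomposition of `T` into direct sums:
the number of columns `k` after which the filling can be cut. -/
noncomputable def comp (T : Filling) : ℕ :=
  Set.ncard {k | 1 ≤ k ∧ k ≤ T.len ∧ (k = T.len ∨ T.shape k < T.shape (k + 1)) ∧
    ∀ p ∈ T.dots, k < p.1 → T.shape k < p.2}

/-- `S = T ⊕ T'`: `T'` is placed strictly to the north-east of `T`, the
rectangle below `T'` being filled with empty cells. -/
def IsDsum (T T' S : Filling) : Prop :=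
  S.len = T.len + T'.len ∧
  (∀ i, 1 ≤ i → i ≤ T.len → S.shape i = T.shape i) ∧
  (∀ i, 1 ≤ i → i ≤ T'.len → S.shape (T.len + i) = T.shape T.len + T'.shape i) ∧
  S.dots = T.dots ∪ (fun p : ℕ × ℕ => (p.1 + T.len, p.2 + T.shape T.len)) '' T'.dots

/-- A square shape. -/
def Square (T : Filling) : Prop :=
  ∀ i, 1 ≤ i → i ≤ T.len → T.shape i = T.len

/-- Enriched permutation filling: a positive filling of a square shape in which
a dot is the leftmost dot of its row iff it is the topmost dot of its column. -/
def Enriched (T : Filling) : Prop :=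
  T.Square ∧
  (∀ i, 1 ≤ i → i ≤ T.len → ∃ j, (i, j) ∈ T.dots) ∧
  (∀ j, 1 ≤ j → j ≤ T.len → ∃ i, (i, j) ∈ T.dots) ∧
  (∀ p ∈ T.dots,
    ((∀ q ∈ T.dots, q.2 = p.2 → p.1 ≤ q.1) ↔ (∀ q ∈ T.dots, q.1 = p.1 → q.2 ≤ p.2)))

/-- `S = R ⊞ R'`: boxed sum of enriched permutation fillings. -/
def IsBoxSum (R R' S : Filling) : Prop :=
  S.len = R.len + R'.len ∧
  (∀ i, 1 ≤ i → i ≤ S.len → S.shape i = S.len) ∧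
  S.dots = R.dots ∪ (fun p : ℕ × ℕ => (p.1 + R.len, p.2 + R.len)) '' R'.dots

/-- The number of components of the finest decomposition into boxed sums. -/
noncomputable def boxcomp (T : Filling) : ℕ :=
  Set.ncard {k | 1 ≤ k ∧ k ≤ T.len ∧
    ∀ p ∈ T.dots, (p.1 ≤ k ∧ p.2 ≤ k) ∨ (k < p.1 ∧ k < p.2)}

end Filling

/-! ## Barred permutations, hatted permutations and marked matchings. -/

/-- A barred permutation: a permutation of `{1,…,n}` together with a set of
barred ascent tops. -/
structure BarredPerm where
  n : ℕ
  toFun : ℕ → ℕ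
  X : Set ℕ
  n_pos : 1 ≤ n
  isPerm : IsPermOn n toFun
  X_subset : X ⊆ permAsc n toFun

/-- Direct sum of barred permutations. -/
def BarredPerm.IsDsum (B B' C : BarredPerm) : Prop :=
  C.n = B.n + B'.n ∧
  (∀ i, C.toFun i = if i ≤ B.n then B.toFun i
    else if i ≤ B.n + B'.n then B'.toFun (i - B.n) + B.n else 0) ∧
  C.X = B.X ∪ (fun a => a + B.n) '' B'.X

/-- A hatted permutation: a permutation of `{1,…,n}` together with a set of
hatted silly ascents. -/
structure HattedPerm where
  n : ℕ
  toFun : ℕ → ℕ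
  X : Set ℕ
  n_pos : 1 ≤ n
  isPerm : IsPermOn n toFun
  X_subset : X ⊆ permAscSilly n toFun

/-- Direct sum of hatted permutations. -/
def HattedPerm.IsDsum (B B' C : HattedPerm) : Prop :=
  C.n = B.n + B'.n ∧
  (∀ i, C.toFun i = if i ≤ B.n then B.toFun i
    else if i ≤ B.n + B'.n then B'.toFun (i - B.n) + B.n else 0) ∧
  C.X = B.X ∪ (fun a => a + B.n) '' B'.X

/-- A marked matching: a matching without left nestings together with a set of
marked right adjacencies. -/
structure MarkedMatching where
  n : ℕ
  n_pos : 1 ≤ n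
  M : Matching n
  noLeftNesting : M.NoLeftNesting
  X : Set ℕ
  X_subset : X ⊆ M.RadjSet

/-- Direct sum of marked matchings. -/
def MarkedMatching.IsDsum (A B C : MarkedMatching) : Prop :=
  Matching.IsDsum A.M B.M C.M ∧ C.X = A.X ∪ (fun a => a + A.n) '' B.X

/-! ### Auxiliary machinery for the proof -/

section Helpers

open Classical in
/-- Functions pinned to zero outside `[0,N]` with values `≤ Bd` form a finite set. -/
lemma finite_pinned (N Bd : ℕ) :
    {f : ℕ → ℕ | (∀ i, f i ≤ Bd) ∧ ∀ i, N < i → f i = 0}.Finite := by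
  have h : {f : ℕ → ℕ | (∀ i, f i ≤ Bd) ∧ ∀ i, N < i → f i = 0} ⊆
      Set.range (fun (v : Fin (N+1) → Fin (Bd+1)) (i : ℕ) =>
        if h : i < N + 1 then (v ⟨i, h⟩ : ℕ) else 0) := by
    rintro f ⟨h1, h2⟩
    refine ⟨fun i => ⟨f i, Nat.lt_succ_of_le (h1 i)⟩, ?_⟩
    funext i
    by_cases hi : i < N + 1
    · simp [hi]
    · simp only [hi, dite_false]
      exact (h2 i (by omega)).symm
  exact (Set.finite_range _).subset h

open Classical in
lemma ncard_fiberwise {α : Type*} (S : Set α) (hS : S.Finite) (F : Finset ℕ) (ind : α → ℕ)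
    (h : ∀ a ∈ S, ind a ∈ F) :
    S.ncard = ∑ x ∈ F, {a | a ∈ S ∧ ind a = x}.ncard := by
  classical
  rw [Set.ncard_eq_toFinset_card S hS]
  rw [Finset.card_eq_sum_card_fiberwise (f := ind) (t := F)
    (fun a ha => h a (hS.mem_toFinset.mp ha))]
  refine Finset.sum_congr rfl fun x _ => ?_
  have : {a | a ∈ S ∧ ind a = x} = ↑(hS.toFinset.filter (fun a => ind a = x)) := by
    ext a; simp [Set.Finite.mem_toFinset]
  rw [this, Set.ncard_coe_finset]

open Classical in
lemma sum_ncard_fiber {α : Type*} (C : Set α) (hC : C.Finite) (R : α → Set ℕ) (F : Finset ℕ)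
    (hsub : ∀ a ∈ C, R a ⊆ ↑F) (k : ℕ) (hk : ∀ a ∈ C, (R a).ncard = k) :
    ∑ y ∈ F, {a | a ∈ C ∧ y ∈ R a}.ncard = k * C.ncard := by
  classical
  have hterm : ∀ y, {a | a ∈ C ∧ y ∈ R a}.ncard =
      (hC.toFinset.filter (fun a => y ∈ R a)).card := by
    intro y
    have : {a | a ∈ C ∧ y ∈ R a} = ↑(hC.toFinset.filter (fun a => y ∈ R a)) := by
      ext a; simp [Set.Finite.mem_toFinset]
    rw [this, Set.ncard_coe_finset]
  calc ∑ y ∈ F, {a | a ∈ C ∧ y ∈ R a}.ncard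
      = ∑ y ∈ F, ∑ a ∈ hC.toFinset, (if y ∈ R a then 1 else 0) := by
        refine Finset.sum_congr rfl fun y _ => ?_
        rw [hterm y, Finset.card_filter]
    _ = ∑ a ∈ hC.toFinset, ∑ y ∈ F, (if y ∈ R a then 1 else 0) := Finset.sum_comm
    _ = ∑ a ∈ hC.toFinset, k := by
        refine Finset.sum_congr rfl fun a ha => ?_
        have haC : a ∈ C := hC.mem_toFinset.mp ha
        have h3 : (↑(F.filter (fun y => y ∈ R a)) : Set ℕ) = R a := by
          ext y; simp only [Finset.coe_filter, Set.mem_setOf_eq]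
          exact ⟨fun h => h.2, fun h => ⟨hsub a haC h, h⟩⟩
        calc ∑ y ∈ F, (if y ∈ R a then 1 else 0)
            = (F.filter (fun y => y ∈ R a)).card := (Finset.card_filter _ _).symm
          _ = (R a).ncard := by rw [← Set.ncard_coe_finset, h3]
          _ = k := hk a haC
    _ = k * C.ncard := by
        rw [Finset.sum_const, smul_eq_mul, ← Set.ncard_eq_toFinset_card C hC, mul_comm]

open Classical in
lemma sum_ite_const_mem (F : Finset ℕ) (A : Set ℕ) (hA : A ⊆ ↑F) (c : ℕ) :
    ∑ x ∈ F, (if x ∈ A then c else 0) = A.ncard * c := by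
  classical
  have h3 : (↑(F.filter (fun x => x ∈ A)) : Set ℕ) = A := by
    ext x; simp only [Finset.coe_filter, Set.mem_setOf_eq]
    exact ⟨fun h => h.2, fun h => ⟨hA h, h⟩⟩
  calc ∑ x ∈ F, (if x ∈ A then c else 0)
      = ∑ x ∈ F.filter (fun x => x ∈ A), c := (Finset.sum_filter _ _).symm
    _ = (F.filter (fun x => x ∈ A)).card * c := by rw [Finset.sum_const, smul_eq_mul]
    _ = A.ncard * c := by rw [← Set.ncard_coe_finset, h3]

lemma ncard_union_three {α : Type*} (s t u : Set α) (hs : s.Finite) (ht : t.Finite) (hu : u.Finite)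
    (hst : Disjoint s t) (hsu : Disjoint s u) (htu : Disjoint t u) :
    (s ∪ t ∪ u).ncard = s.ncard + t.ncard + u.ncard := by
  rw [Set.ncard_union_eq (by exact Set.disjoint_union_left.mpr ⟨hsu, htu⟩) (hs.union ht) hu,
    Set.ncard_union_eq hst hs ht]

end Helpers
/-! ### Permutation side -/

section PermSide

lemma IsPermOn.val_mem {n : ℕ} {f : ℕ → ℕ} (hf : IsPermOn n f) {j : ℕ}
    (h1 : 1 ≤ j) (h2 : j ≤ n) : 1 ≤ f j ∧ f j ≤ n :=
  Set.mem_Icc.mp (hf.1.1 (Set.mem_Icc.mpr ⟨h1, h2⟩))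

lemma IsPermOn.inj' {n : ℕ} {f : ℕ → ℕ} (hf : IsPermOn n f) {j k : ℕ}
    (hj1 : 1 ≤ j) (hj2 : j ≤ n) (hk1 : 1 ≤ k) (hk2 : k ≤ n) (h : f j = f k) : j = k :=
  hf.1.2.1 (Set.mem_Icc.mpr ⟨hj1, hj2⟩) (Set.mem_Icc.mpr ⟨hk1, hk2⟩) h

lemma IsPermOn.exists_pos {n : ℕ} {f : ℕ → ℕ} (hf : IsPermOn n f) {v : ℕ}
    (h1 : 1 ≤ v) (h2 : v ≤ n) : ∃ p, (1 ≤ p ∧ p ≤ n) ∧ f p = v := by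
  obtain ⟨k, hk, hfk⟩ := hf.1.2.2 (Set.mem_Icc.mpr ⟨h1, h2⟩)
  exact ⟨k, Set.mem_Icc.mp hk, hfk⟩

lemma IsPermOn.zero_out {n : ℕ} {f : ℕ → ℕ} (hf : IsPermOn n f) {j : ℕ}
    (h : j = 0 ∨ n < j) : f j = 0 := by
  apply hf.2
  rw [Set.mem_Icc]
  omega

/-- Explicit description of shifted short-ascent bottoms. -/
def shAdjExp (n : ℕ) (f : ℕ → ℕ) : Set ℕ :=
  {v | ∃ j, 1 ≤ j ∧ j + 1 ≤ n ∧ f j + 1 = f (j + 1) ∧ v = f j}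

lemma shAdj_eq (n : ℕ) (f : ℕ → ℕ) :
    (fun a => a - 1) '' permAdjAsc n f = shAdjExp n f := by
  ext v
  constructor
  · rintro ⟨a, ⟨j, h2, hn, hadj, rfl⟩, rfl⟩
    refine ⟨j - 1, by omega, by omega, ?_, ?_⟩
    · rw [(show j - 1 + 1 = j by omega)]; exact hadj
    · simp only
      omega
  · rintro ⟨j, h1, hn, hadj, rfl⟩
    refine ⟨f (j+1), ⟨j+1, by omega, hn, ?_, rfl⟩, ?_⟩
    · rw [(show j + 1 - 1 = j by omega)]; exact hadj
    · simp only
      omega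

/-- The classes of permutations being counted. -/
def PermClass (n : ℕ) (A B : Set ℕ) : Set (ℕ → ℕ) :=
  {f : ℕ → ℕ | IsPermOn n f ∧ permAscBottomProper n f = A ∧
    (fun a => a - 1) '' permAdjAsc n f = B}

lemma mem_PermClass_iff {n : ℕ} {A B : Set ℕ} {f : ℕ → ℕ} :
    f ∈ PermClass n A B ↔ IsPermOn n f ∧ permAscBottomProper n f = A ∧ shAdjExp n f = B := by
  rw [PermClass, Set.mem_setOf_eq, shAdj_eq]

lemma PermClass_finite (n : ℕ) (A B : Set ℕ) : (PermClass n A B).Finite := by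
  apply (finite_pinned n n).subset
  rintro f ⟨hf, -, -⟩
  constructor
  · intro i
    by_cases hi : 1 ≤ i ∧ i ≤ n
    · exact (hf.val_mem hi.1 hi.2).2
    · rw [hf.zero_out (by omega)]; omega
  · intro i hi
    exact hf.zero_out (Or.inr hi)

lemma ABP_sub {n : ℕ} {f : ℕ → ℕ} (hf : IsPermOn n f) :
    ∀ v ∈ permAscBottomProper n f, 1 ≤ v ∧ v + 2 ≤ n := by
  rintro v ⟨j, h1, h2, hlt, rfl⟩
  have := hf.val_mem h1 (by omega)
  have := hf.val_mem (show 1 ≤ j+1 by omega) h2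
  omega

lemma shAdj_sub {n : ℕ} {f : ℕ → ℕ} (hf : IsPermOn n f) :
    ∀ v ∈ shAdjExp n f, 1 ≤ v ∧ v + 1 ≤ n := by
  rintro v ⟨j, h1, h2, hadj, rfl⟩
  have := hf.val_mem h1 (by omega)
  have := hf.val_mem (show 1 ≤ j+1 by omega) h2
  omega

lemma perm_stats_disjoint {n : ℕ} {f : ℕ → ℕ} (hf : IsPermOn n f) :
    Disjoint (permAscBottomProper n f) (shAdjExp n f) := by
  rw [Set.disjoint_left]
  rintro v ⟨j, hj1, hj2, hlt, rfl⟩ ⟨k, hk1, hk2, hadj, hvk⟩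
  have hjk : j = k := hf.inj' (by omega) (by omega) (by omega) (by omega) hvk
  subst hjk
  omega

/-- Insert value `v` at position `p`. -/
def insF (p : ℕ) (g : ℕ → ℕ) (v : ℕ) : ℕ → ℕ :=
  fun j => if j < p then g j else if j = p then v else g (j - 1)

/-- Delete the value at position `p`. -/
def delF (p : ℕ) (f : ℕ → ℕ) : ℕ → ℕ :=
  fun j => if j < p then f j else f (j + 1)

lemma insF_lt {p g v j} (h : j < p) : insF p g v j = g j := by simp [insF, h]
lemma insF_self {p g v} : insF p g v p = v := by simp [insF]
lemma insF_gt {p g v j} (h : p < j) : insF p g v j = g (j - 1) := by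
  simp [insF, show ¬ j < p by omega, show ¬ j = p by omega]
lemma delF_lt {p f j} (h : j < p) : delF p f j = f j := by simp [delF, h]
lemma delF_ge {p f j} (h : p ≤ j) : delF p f j = f (j + 1) := by
  simp [delF, Nat.not_lt.mpr h]

lemma delF_insF (p : ℕ) (g : ℕ → ℕ) (v : ℕ) : delF p (insF p g v) = g := by
  funext j
  by_cases h : j < p
  · rw [delF_lt h, insF_lt h]
  · rw [delF_ge (by omega), insF_gt (by omega), Nat.add_sub_cancel]

lemma insF_delF {p : ℕ} {f : ℕ → ℕ} {v : ℕ} (hv : f p = v) : insF p (delF p f) v = f := by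
  funext j
  rcases lt_trichotomy j p with h | h | h
  · rw [insF_lt h, delF_lt h]
  · subst h; rw [insF_self, hv]
  · rw [insF_gt h, delF_ge (by omega), (show j - 1 + 1 = j by omega)]

lemma isPermOn_insF {m : ℕ} {g : ℕ → ℕ} (hg : IsPermOn m g) {p : ℕ}
    (hp1 : 1 ≤ p) (hp2 : p ≤ m + 1) : IsPermOn (m + 1) (insF p g (m + 1)) := by
  constructor
  · refine ⟨?_, ?_, ?_⟩
    · rintro j hj
      rw [Set.mem_Icc] at hj ⊢
      rcases lt_trichotomy j p with h | h | h
      · rw [insF_lt h]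
        have := hg.val_mem hj.1 (by omega)
        omega
      · subst h; rw [insF_self]; omega
      · rw [insF_gt h]
        have := hg.val_mem (show 1 ≤ j - 1 by omega) (by omega)
        omega
    · rintro j hj k hk he
      rw [Set.mem_Icc] at hj hk
      rcases lt_trichotomy j p with h1 | h1 | h1 <;> rcases lt_trichotomy k p with h2 | h2 | h2
      · rw [insF_lt h1, insF_lt h2] at he
        exact hg.inj' hj.1 (by omega) hk.1 (by omega) he
      · subst h2; rw [insF_lt h1, insF_self] at he
        have := hg.val_mem hj.1 (by omega); omega
      · rw [insF_lt h1, insF_gt h2] at he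
        have := hg.inj' hj.1 (by omega) (show 1 ≤ k - 1 by omega) (by omega) he
        omega
      · subst h1; rw [insF_self, insF_lt h2] at he
        have := hg.val_mem hk.1 (by omega); omega
      · omega
      · subst h1; rw [insF_self, insF_gt h2] at he
        have := hg.val_mem (show 1 ≤ k - 1 by omega) (by omega); omega
      · rw [insF_gt h1, insF_lt h2] at he
        have := hg.inj' (show 1 ≤ j - 1 by omega) (by omega) hk.1 (by omega) he
        omega
      · subst h2; rw [insF_gt h1, insF_self] at he
        have := hg.val_mem (show 1 ≤ j - 1 by omega) (by omega); omega
      · rw [insF_gt h1, insF_gt h2] at he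
        have := hg.inj' (show 1 ≤ j - 1 by omega) (by omega) (show 1 ≤ k - 1 by omega)
          (by omega) he
        omega
    · rintro v hv
      rw [Set.mem_Icc] at hv
      by_cases hv1 : v = m + 1
      · exact ⟨p, Set.mem_Icc.mpr ⟨hp1, hp2⟩, by rw [insF_self, hv1]⟩
      · obtain ⟨k, hk, hgk⟩ := hg.exists_pos hv.1 (by omega)
        by_cases hkp : k < p
        · exact ⟨k, Set.mem_Icc.mpr ⟨hk.1, by omega⟩, by rw [insF_lt hkp]; exact hgk⟩
        · refine ⟨k + 1, Set.mem_Icc.mpr ⟨by omega, by omega⟩, ?_⟩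
          rw [insF_gt (by omega), Nat.add_sub_cancel]
          exact hgk
  · intro i hi
    rw [Set.mem_Icc] at hi
    push_neg at hi
    rcases lt_trichotomy i p with h | h | h
    · rw [insF_lt h]
      exact hg.zero_out (by omega)
    · omega
    · rw [insF_gt h]
      exact hg.zero_out (by omega)

lemma isPermOn_delF {m : ℕ} {f : ℕ → ℕ} (hf : IsPermOn (m + 1) f) {p : ℕ}
    (hp1 : 1 ≤ p) (hp2 : p ≤ m + 1) (hfp : f p = m + 1) : IsPermOn m (delF p f) := by
  have hne : ∀ j, 1 ≤ j → j ≤ m + 1 → j ≠ p → f j ≠ m + 1 := by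
    intro j h1 h2 h3 he
    exact h3 (hf.inj' h1 h2 hp1 hp2 (by rw [he, hfp]))
  constructor
  · refine ⟨?_, ?_, ?_⟩
    · rintro j hj
      rw [Set.mem_Icc] at hj ⊢
      by_cases h : j < p
      · rw [delF_lt h]
        have := hf.val_mem hj.1 (by omega)
        have := hne j hj.1 (by omega) (by omega)
        omega
      · rw [delF_ge (by omega)]
        have := hf.val_mem (show 1 ≤ j + 1 by omega) (by omega)
        have := hne (j+1) (by omega) (by omega) (by omega)
        omega
    · rintro j hj k hk he
      rw [Set.mem_Icc] at hj hk
      by_cases h1 : j < p <;> by_cases h2 : k < p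
      · rw [delF_lt h1, delF_lt h2] at he
        exact hf.inj' hj.1 (by omega) hk.1 (by omega) he
      · rw [delF_lt h1, delF_ge (by omega)] at he
        have := hf.inj' hj.1 (by omega) (show 1 ≤ k + 1 by omega) (by omega) he
        omega
      · rw [delF_ge (by omega), delF_lt h2] at he
        have := hf.inj' (show 1 ≤ j + 1 by omega) (by omega) hk.1 (by omega) he
        omega
      · rw [delF_ge (by omega), delF_ge (by omega)] at he
        have := hf.inj' (show 1 ≤ j + 1 by omega) (by omega) (show 1 ≤ k + 1 by omega)
          (by omega) he
        omega
    · rintro v hv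
      rw [Set.mem_Icc] at hv
      obtain ⟨k, hk, hfk⟩ := hf.exists_pos hv.1 (by omega)
      have hkp : k ≠ p := by
        intro h; rw [h, hfp] at hfk; omega
      by_cases h : k < p
      · exact ⟨k, Set.mem_Icc.mpr ⟨hk.1, by omega⟩, by rw [delF_lt h]; exact hfk⟩
      · refine ⟨k - 1, Set.mem_Icc.mpr ⟨by omega, by omega⟩, ?_⟩
        rw [delF_ge (by omega), (show k - 1 + 1 = k by omega)]
        exact hfk
  · intro i hi
    rw [Set.mem_Icc] at hi
    push_neg at hi
    by_cases h : i < p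
    · rw [delF_lt h]
      exact hf.zero_out (by omega)
    · rw [delF_ge (by omega)]
      exact hf.zero_out (by omega)

lemma ABP_insF {m : ℕ} {g : ℕ → ℕ} (hg : IsPermOn m g) {p : ℕ}
    (hp1 : 1 ≤ p) (hp2 : p ≤ m + 1) :
    permAscBottomProper (m+1) (insF p g (m+1)) =
      permAscBottomProper m g ∪ {v | 2 ≤ p ∧ v = g (p-1) ∧ g (p-1) < m} := by
  ext v
  simp only [permAscBottomProper, Set.mem_union, Set.mem_setOf_eq]
  constructor
  · rintro ⟨j, hj1, hj2, hlt, hv⟩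
    by_cases h1 : j + 1 < p
    · left
      rw [insF_lt (by omega), insF_lt (by omega)] at hlt
      rw [insF_lt (by omega)] at hv
      exact ⟨j, hj1, by omega, hlt, hv⟩
    · by_cases h2 : j + 1 = p
      · right
        have e1 : insF p g (m+1) j = g j := insF_lt (by omega)
        have e2 : insF p g (m+1) (j+1) = m+1 := by rw [h2, insF_self]
        rw [e1] at hv; rw [e1, e2] at hlt
        refine ⟨by omega, ?_, ?_⟩ <;> rw [(show p - 1 = j by omega)]
        · exact hv
        · omega
      · by_cases h3 : j = p
        · exfalso
          have e1 : insF p g (m+1) j = m+1 := by rw [h3, insF_self]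
          have e2 : insF p g (m+1) (j+1) = g j := by
            rw [insF_gt (by omega), (show j + 1 - 1 = j by omega)]
          rw [e1, e2] at hlt
          have := hg.val_mem (show (1:ℕ) ≤ j by omega) (show j ≤ m by omega)
          omega
        · left
          have hpj : p < j := by omega
          have e1 : insF p g (m+1) j = g (j-1) := insF_gt hpj
          have e2 : insF p g (m+1) (j+1) = g j := by
            rw [insF_gt (by omega), (show j + 1 - 1 = j by omega)]
          rw [e1] at hv; rw [e1, e2] at hlt
          refine ⟨j - 1, by omega, by omega, ?_, hv⟩
          rw [(show j - 1 + 1 = j by omega)]; exact hlt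
  · rintro (⟨k, hk1, hk2, hlt, hv⟩ | ⟨hp, hv, hlt⟩)
    · by_cases h1 : k + 1 < p
      · refine ⟨k, hk1, by omega, ?_, ?_⟩
        · rw [insF_lt (by omega), insF_lt (by omega)]; exact hlt
        · rw [insF_lt (by omega)]; exact hv
      · by_cases h2 : k + 1 = p
        · refine ⟨k, hk1, by omega, ?_, ?_⟩
          · rw [insF_lt (by omega), (show k + 1 = p from h2), insF_self]
            have := hg.val_mem (show 1 ≤ k+1 by omega) hk2
            omega
          · rw [insF_lt (by omega)]; exact hv
        · refine ⟨k + 1, by omega, by omega, ?_, ?_⟩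
          · rw [insF_gt (by omega), insF_gt (by omega), Nat.add_sub_cancel,
              (show k + 1 + 1 - 1 = k + 1 by omega)]
            exact hlt
          · rw [insF_gt (by omega), Nat.add_sub_cancel]; exact hv
    · refine ⟨p - 1, by omega, by omega, ?_, ?_⟩
      · rw [(show p - 1 + 1 = p by omega), insF_lt (by omega), insF_self]
        omega
      · rw [insF_lt (by omega)]; exact hv

lemma shAdj_insF {m : ℕ} {g : ℕ → ℕ} (hg : IsPermOn m g) {p : ℕ}
    (hp1 : 1 ≤ p) (hp2 : p ≤ m + 1) :
    shAdjExp (m+1) (insF p g (m+1)) =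
      (shAdjExp m g \ {v | 2 ≤ p ∧ v = g (p-1)}) ∪ {v | 2 ≤ p ∧ v = g (p-1) ∧ g (p-1) = m} := by
  ext v
  simp only [shAdjExp, Set.mem_union, Set.mem_diff, Set.mem_setOf_eq]
  constructor
  · rintro ⟨j, hj1, hj2, hadj, hv⟩
    by_cases h1 : j + 1 < p
    · left
      rw [insF_lt (by omega), insF_lt (by omega)] at hadj
      rw [insF_lt (by omega)] at hv
      refine ⟨⟨j, hj1, by omega, hadj, hv⟩, ?_⟩
      rintro ⟨hp, hveq⟩
      have : j = p - 1 := hg.inj' hj1 (by omega) (by omega) (by omega) (by rw [← hv, hveq])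
      omega
    · by_cases h2 : j + 1 = p
      · right
        have e1 : insF p g (m+1) j = g j := insF_lt (by omega)
        have e2 : insF p g (m+1) (j+1) = m + 1 := by rw [h2, insF_self]
        rw [e1] at hv; rw [e1, e2] at hadj
        refine ⟨by omega, ?_, ?_⟩ <;> rw [(show p - 1 = j by omega)]
        · exact hv
        · omega
      · by_cases h3 : j = p
        · exfalso
          have e1 : insF p g (m+1) j = m+1 := by rw [h3, insF_self]
          have e2 : insF p g (m+1) (j+1) = g j := by
            rw [insF_gt (by omega), (show j + 1 - 1 = j by omega)]
          rw [e1, e2] at hadj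
          have := hg.val_mem (show (1:ℕ) ≤ j by omega) (show j ≤ m by omega)
          omega
        · left
          have hpj : p < j := by omega
          have e1 : insF p g (m+1) j = g (j-1) := insF_gt hpj
          have e2 : insF p g (m+1) (j+1) = g j := by
            rw [insF_gt (by omega), (show j + 1 - 1 = j by omega)]
          rw [e1] at hv; rw [e1, e2] at hadj
          constructor
          · refine ⟨j - 1, by omega, by omega, ?_, hv⟩
            rw [(show j - 1 + 1 = j by omega)]; exact hadj
          · rintro ⟨hp, hveq⟩
            have : j - 1 = p - 1 :=
              hg.inj' (by omega) (by omega) (by omega) (by omega) (by rw [← hv, hveq])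
            omega
  · rintro (⟨⟨k, hk1, hk2, hadj, hv⟩, hnb⟩ | ⟨hp, hv, hm⟩)
    · by_cases h1 : k + 1 < p
      · refine ⟨k, hk1, by omega, ?_, ?_⟩
        · rw [insF_lt (by omega), insF_lt (by omega)]; exact hadj
        · rw [insF_lt (by omega)]; exact hv
      · by_cases h2 : k + 1 = p
        · exact absurd ⟨by omega, by rw [(show p - 1 = k by omega)]; exact hv⟩ hnb
        · refine ⟨k + 1, by omega, by omega, ?_, ?_⟩
          · rw [insF_gt (by omega), insF_gt (by omega), Nat.add_sub_cancel,
              (show k + 1 + 1 - 1 = k + 1 by omega)]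
            exact hadj
          · rw [insF_gt (by omega), Nat.add_sub_cancel]; exact hv
    · refine ⟨p - 1, by omega, by omega, ?_, ?_⟩
      · rw [(show p - 1 + 1 = p by omega), insF_lt (by omega), insF_self]
        omega
      · rw [insF_lt (by omega)]; exact hv

open Classical in
noncomputable def posOf (n : ℕ) (f : ℕ → ℕ) (v : ℕ) : ℕ :=
  if h : ∃ p, (1 ≤ p ∧ p ≤ n) ∧ f p = v then h.choose else 0

lemma posOf_spec {n : ℕ} {f : ℕ → ℕ} {v : ℕ} (h : ∃ p, (1 ≤ p ∧ p ≤ n) ∧ f p = v) :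
    (1 ≤ posOf n f v ∧ posOf n f v ≤ n) ∧ f (posOf n f v) = v := by
  classical
  rw [posOf]
  rw [dif_pos h]
  exact h.choose_spec

lemma posOf_eq {n : ℕ} {f : ℕ → ℕ} (hf : IsPermOn n f) {v p : ℕ}
    (hp1 : 1 ≤ p) (hp2 : p ≤ n) (hfp : f p = v) : posOf n f v = p := by
  obtain ⟨⟨h1, h2⟩, h3⟩ := posOf_spec ⟨p, ⟨hp1, hp2⟩, hfp⟩
  exact hf.inj' h1 h2 hp1 hp2 (by rw [h3, hfp])

noncomputable def pind (n : ℕ) (f : ℕ → ℕ) : ℕ := f (posOf n f n - 1)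

lemma perm_ins {m : ℕ} {g : ℕ → ℕ} (hg : IsPermOn m g) {p : ℕ}
    (hp1 : 1 ≤ p) (hp2 : p ≤ m + 1) :
    insF p g (m+1) ∈ PermClass (m+1)
        (permAscBottomProper m g ∪ {v | 2 ≤ p ∧ v = g (p-1) ∧ g (p-1) < m})
        ((shAdjExp m g \ {v | 2 ≤ p ∧ v = g (p-1)}) ∪ {v | 2 ≤ p ∧ v = g (p-1) ∧ g (p-1) = m}) ∧
      posOf (m+1) (insF p g (m+1)) (m+1) = p ∧
      pind (m+1) (insF p g (m+1)) = (if p = 1 then 0 else g (p - 1)) ∧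
      delF p (insF p g (m+1)) = g := by
  have hperm := isPermOn_insF hg hp1 hp2
  have hpos : posOf (m+1) (insF p g (m+1)) (m+1) = p := posOf_eq hperm hp1 hp2 insF_self
  refine ⟨mem_PermClass_iff.mpr ⟨hperm, ABP_insF hg hp1 hp2, shAdj_insF hg hp1 hp2⟩, hpos,
    ?_, delF_insF p g (m+1)⟩
  rw [pind, hpos]
  by_cases hp : p = 1
  · rw [if_pos hp, hp, insF_lt (by omega)]
    exact hg.zero_out (by omega)
  · rw [if_neg hp, insF_lt (by omega)]

lemma perm_master {m : ℕ} {A B : Set ℕ} {f : ℕ → ℕ} (hf : f ∈ PermClass (m+1) A B) :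
    ∃ p g, (1 ≤ p ∧ p ≤ m + 1) ∧ IsPermOn m g ∧ f = insF p g (m+1) ∧ delF p f = g ∧
      posOf (m+1) f (m+1) = p ∧
      pind (m+1) f = (if p = 1 then 0 else g (p-1)) ∧
      (2 ≤ p → 1 ≤ g (p-1) ∧ g (p-1) ≤ m) ∧
      A = permAscBottomProper m g ∪ {v | 2 ≤ p ∧ v = g (p-1) ∧ g (p-1) < m} ∧
      B = (shAdjExp m g \ {v | 2 ≤ p ∧ v = g (p-1)}) ∪ {v | 2 ≤ p ∧ v = g (p-1) ∧ g (p-1) = m} := by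
  obtain ⟨hperm, hA, hB⟩ := mem_PermClass_iff.mp hf
  obtain ⟨⟨hp1, hp2⟩, hfp⟩ := posOf_spec (hperm.exists_pos (v := m+1) (by omega) (le_refl _))
  set p := posOf (m+1) f (m+1) with hpdef
  set g := delF p f with hgdef
  have hgp : ∀ j, j < p → g j = f j := fun j hj => delF_lt hj
  have hgperm : IsPermOn m g := isPermOn_delF hperm hp1 hp2 hfp
  have hfins : f = insF p g (m+1) := (insF_delF hfp).symm
  refine ⟨p, g, ⟨hp1, hp2⟩, hgperm, hfins, rfl, rfl, ?_, ?_, ?_, ?_⟩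
  · have hpind : pind (m+1) f = f (p - 1) := by rw [pind, ← hpdef]
    by_cases hp : p = 1
    · rw [hpind, if_pos hp, hp]
      exact hperm.zero_out (by omega)
    · rw [hpind, if_neg hp, hgp (p-1) (by omega)]
  · intro h2
    rw [hgp (p-1) (by omega)]
    have h1 := hperm.val_mem (show 1 ≤ p - 1 by omega) (show p - 1 ≤ m + 1 by omega)
    refine ⟨h1.1, ?_⟩
    rcases Nat.lt_or_ge (f (p-1)) (m+1) with h | h
    · omega
    · exfalso
      have he : f (p - 1) = f p := by omega
      have := hperm.inj' (show 1 ≤ p - 1 by omega) (by omega) hp1 hp2 he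
      omega
  · rw [← hA, hfins, ABP_insF hgperm hp1 hp2]
  · rw [← hB, hfins, shAdj_insF hgperm hp1 hp2]

lemma pbucket_zero (m : ℕ) (A B : Set ℕ) :
    {f | f ∈ PermClass (m+1) A B ∧ pind (m+1) f = 0}.ncard = (PermClass m A B).ncard := by
  have himg : (fun f => delF (posOf (m+1) f (m+1)) f) ''
      {f | f ∈ PermClass (m+1) A B ∧ pind (m+1) f = 0} = PermClass m A B := by
    ext g
    constructor
    · rintro ⟨f, ⟨hf, hind⟩, rfl⟩
      obtain ⟨p, g', ⟨hp1, hp2⟩, hgperm, hfins, hdel, hpos, hpind, hval, hAeq, hBeq⟩ :=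
        perm_master hf
      have hp : p = 1 := by
        by_contra hne
        rw [hpind, if_neg hne] at hind
        have := hval (by omega)
        omega
      show delF (posOf (m+1) f (m+1)) f ∈ PermClass m A B
      rw [hpos, hdel]
      rw [mem_PermClass_iff]
      refine ⟨hgperm, ?_, ?_⟩
      · rw [hAeq]
        ext v; simp only [Set.mem_union, Set.mem_setOf_eq]
        constructor
        · exact fun h => Or.inl h
        · rintro (h | h)
          · exact h
          · omega
      · rw [hBeq]
        ext v; simp only [Set.mem_union, Set.mem_diff, Set.mem_setOf_eq]
        constructor
        · intro h
          refine Or.inl ⟨h, ?_⟩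
          rintro ⟨h2, -⟩; omega
        · rintro (⟨h, -⟩ | h)
          · exact h
          · omega
    · intro hg
      obtain ⟨hgperm, hAeq, hBeq⟩ := mem_PermClass_iff.mp hg
      obtain ⟨hmem, hpos, hpind, hdel⟩ := perm_ins hgperm (le_refl 1) (by omega)
      refine ⟨insF 1 g (m+1), ⟨?_, ?_⟩, ?_⟩
      · rw [mem_PermClass_iff] at hmem ⊢
        refine ⟨hmem.1, ?_, ?_⟩
        · rw [hmem.2.1, hAeq]
          ext v; simp only [Set.mem_union, Set.mem_setOf_eq]
          constructor
          · rintro (h | h)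
            · exact h
            · omega
          · exact fun h => Or.inl h
        · rw [hmem.2.2, hBeq]
          ext v; simp only [Set.mem_union, Set.mem_diff, Set.mem_setOf_eq]
          constructor
          · rintro (⟨h, -⟩ | h)
            · exact h
            · omega
          · intro h
            refine Or.inl ⟨h, ?_⟩
            rintro ⟨h2, -⟩; omega
      · rw [hpind]; simp
      · show delF (posOf (m+1) (insF 1 g (m+1)) (m+1)) (insF 1 g (m+1)) = g
        rw [hpos]; exact hdel
  have hinj : Set.InjOn (fun f => delF (posOf (m+1) f (m+1)) f)
      {f | f ∈ PermClass (m+1) A B ∧ pind (m+1) f = 0} := by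
    rintro f1 ⟨hf1, hind1⟩ f2 ⟨hf2, hind2⟩ he
    obtain ⟨p1, g1, ⟨hp11, hp12⟩, hg1, hfins1, hdel1, hpos1, hpind1, hval1, -, -⟩ :=
      perm_master hf1
    obtain ⟨p2, g2, ⟨hp21, hp22⟩, hg2, hfins2, hdel2, hpos2, hpind2, hval2, -, -⟩ :=
      perm_master hf2
    have hp1 : p1 = 1 := by
      by_contra hne
      rw [hpind1, if_neg hne] at hind1
      have := hval1 (by omega); omega
    have hp2 : p2 = 1 := by
      by_contra hne
      rw [hpind2, if_neg hne] at hind2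
      have := hval2 (by omega); omega
    simp only [hpos1, hpos2, hdel1, hdel2] at he
    rw [hfins1, hfins2, hp1, hp2, he]
  rw [← himg, Set.ncard_image_of_injOn hinj]

open Classical in
lemma pbucket_mid (m : ℕ) (A B : Set ℕ) (hAB : Disjoint A B) {x : ℕ}
    (hx1 : 1 ≤ x) (hx2 : x + 1 ≤ m) :
    {f | f ∈ PermClass (m+1) A B ∧ pind (m+1) f = x}.ncard =
      if x ∈ A then (PermClass m A B).ncard + (PermClass m (A \ {x}) B).ncard +
        (PermClass m (A \ {x}) (B ∪ {x})).ncard else 0 := by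
  have key : ∀ f ∈ {f | f ∈ PermClass (m+1) A B ∧ pind (m+1) f = x},
      ∃ p g, (2 ≤ p ∧ p ≤ m+1) ∧ IsPermOn m g ∧ f = insF p g (m+1) ∧ delF p f = g ∧
        posOf (m+1) f (m+1) = p ∧ g (p-1) = x ∧
        A = permAscBottomProper m g ∪ {x} ∧ B = shAdjExp m g \ {x} := by
    rintro f ⟨hf, hind⟩
    obtain ⟨p, g, ⟨hp1, hp2⟩, hgperm, hfins, hdel, hpos, hpind, hval, hAeq, hBeq⟩ :=
      perm_master hf
    have hp2' : 2 ≤ p := by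
      by_contra h
      rw [hpind, if_pos (by omega)] at hind
      omega
    rw [hpind, if_neg (by omega)] at hind
    refine ⟨p, g, ⟨hp2', hp2⟩, hgperm, hfins, hdel, hpos, hind, ?_, ?_⟩
    · rw [hAeq]; congr 1
      ext v; simp only [Set.mem_setOf_eq, Set.mem_singleton_iff]
      constructor
      · rintro ⟨-, hv, -⟩; rw [hv]; exact hind
      · rintro rfl; exact ⟨hp2', hind.symm, by omega⟩
    · rw [hBeq]
      ext v
      simp only [Set.mem_union, Set.mem_diff, Set.mem_setOf_eq, Set.mem_singleton_iff]
      constructor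
      · rintro (⟨hv, hnb⟩ | ⟨-, hv, hm⟩)
        · exact ⟨hv, fun he => hnb ⟨hp2', by rw [he, ← hind]⟩⟩
        · omega
      · rintro ⟨hv, hne⟩
        refine Or.inl ⟨hv, ?_⟩
        rintro ⟨-, he⟩
        exact hne (by rw [he, hind])
  by_cases hxA : x ∈ A
  · rw [if_pos hxA]
    have hxB : x ∉ B := Set.disjoint_left.mp hAB hxA
    have himg : (fun f => delF (posOf (m+1) f (m+1)) f) ''
        {f | f ∈ PermClass (m+1) A B ∧ pind (m+1) f = x} =
        PermClass m A B ∪ PermClass m (A \ {x}) B ∪ PermClass m (A \ {x}) (B ∪ {x}) := by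
      ext g
      constructor
      · rintro ⟨f, hfb, rfl⟩
        obtain ⟨p, g', ⟨hp1, hp2⟩, hgperm, hfins, hdel, hpos, hgx, hAeq, hBeq⟩ := key f hfb
        show delF (posOf (m+1) f (m+1)) f ∈ _
        rw [hpos, hdel]
        by_cases hxs : x ∈ shAdjExp m g'
        · have hxb : x ∉ permAscBottomProper m g' :=
            fun h => (Set.disjoint_left.mp (perm_stats_disjoint hgperm) h) hxs
          refine Or.inr (mem_PermClass_iff.mpr ⟨hgperm, ?_, ?_⟩)
          · rw [hAeq]
            ext v
            simp only [Set.mem_diff, Set.mem_union, Set.mem_singleton_iff]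
            constructor
            · intro h
              exact ⟨Or.inl h, fun he => hxb (he ▸ h)⟩
            · rintro ⟨h | h, hne⟩
              · exact h
              · exact absurd h hne
          · rw [hBeq]
            ext v
            simp only [Set.mem_union, Set.mem_diff, Set.mem_singleton_iff]
            constructor
            · intro h
              by_cases hv : v = x
              · exact Or.inr hv
              · exact Or.inl ⟨h, hv⟩
            · rintro (⟨h, -⟩ | rfl)
              · exact h
              · exact hxs
        · by_cases hxb : x ∈ permAscBottomProper m g'
          · refine Or.inl (Or.inl (mem_PermClass_iff.mpr ⟨hgperm, ?_, ?_⟩))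
            · rw [hAeq]
              ext v
              simp only [Set.mem_union, Set.mem_singleton_iff]
              constructor
              · exact fun h => Or.inl h
              · rintro (h | rfl)
                · exact h
                · exact hxb
            · rw [hBeq]
              ext v
              simp only [Set.mem_diff, Set.mem_singleton_iff]
              constructor
              · intro h
                exact ⟨h, fun he => hxs (he ▸ h)⟩
              · rintro ⟨h, -⟩; exact h
          · refine Or.inl (Or.inr (mem_PermClass_iff.mpr ⟨hgperm, ?_, ?_⟩))
            · rw [hAeq]
              ext v
              simp only [Set.mem_diff, Set.mem_union, Set.mem_singleton_iff]
              constructor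
              · intro h
                exact ⟨Or.inl h, fun he => hxb (he ▸ h)⟩
              · rintro ⟨h | h, hne⟩
                · exact h
                · exact absurd h hne
            · rw [hBeq]
              ext v
              simp only [Set.mem_diff, Set.mem_singleton_iff]
              constructor
              · intro h
                exact ⟨h, fun he => hxs (he ▸ h)⟩
              · rintro ⟨h, -⟩; exact h
      · intro hg
        have hgperm : IsPermOn m g := by
          rcases hg with (h | h) | h
          · exact (mem_PermClass_iff.mp h).1
          · exact (mem_PermClass_iff.mp h).1
          · exact (mem_PermClass_iff.mp h).1
        obtain ⟨⟨hq1, hq2⟩, hgq⟩ := posOf_spec (hgperm.exists_pos hx1 (by omega))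
        set q := posOf m g x with hqdef
        obtain ⟨hmem, hpos, hpind, hdel⟩ := perm_ins hgperm (p := q + 1) (by omega) (by omega)
        have hq : g (q + 1 - 1) = x := by rw [Nat.add_sub_cancel]; exact hgq
        have hsetA : permAscBottomProper m g ∪
            {v | 2 ≤ q + 1 ∧ v = g (q + 1 - 1) ∧ g (q + 1 - 1) < m} =
            permAscBottomProper m g ∪ {x} := by
          congr 1
          ext v; simp only [Set.mem_setOf_eq, Set.mem_singleton_iff]
          constructor
          · rintro ⟨-, hv, -⟩; rw [hv]; exact hq
          · rintro rfl; exact ⟨by omega, hq.symm, by omega⟩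
        have hsetB : (shAdjExp m g \ {v | 2 ≤ q + 1 ∧ v = g (q + 1 - 1)}) ∪
            {v | 2 ≤ q + 1 ∧ v = g (q + 1 - 1) ∧ g (q + 1 - 1) = m} =
            shAdjExp m g \ {x} := by
          ext v
          simp only [Set.mem_union, Set.mem_diff, Set.mem_setOf_eq, Set.mem_singleton_iff]
          constructor
          · rintro (⟨hv, hnb⟩ | ⟨-, hv, hm⟩)
            · exact ⟨hv, fun he => hnb ⟨by omega, by rw [he, ← hq]⟩⟩
            · omega
          · rintro ⟨hv, hne⟩
            refine Or.inl ⟨hv, ?_⟩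
            rintro ⟨-, he⟩
            exact hne (by rw [he, hq])
        rw [mem_PermClass_iff] at hmem
        obtain ⟨hfperm, hfA, hfB⟩ := hmem
        rw [hsetA] at hfA
        rw [hsetB] at hfB
        refine ⟨insF (q+1) g (m+1), ⟨?_, ?_⟩, ?_⟩
        · rw [mem_PermClass_iff]
          refine ⟨hfperm, ?_, ?_⟩
          · rw [hfA]
            rcases hg with (h | h) | h
            · rw [(mem_PermClass_iff.mp h).2.1]
              ext v; simp only [Set.mem_union, Set.mem_singleton_iff]
              exact ⟨fun h' => h'.elim (fun h'' => h'') (fun h'' => h'' ▸ hxA),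
                fun h' => Or.inl h'⟩
            · rw [(mem_PermClass_iff.mp h).2.1]
              ext v
              simp only [Set.mem_union, Set.mem_diff, Set.mem_singleton_iff]
              constructor
              · rintro (⟨h1, -⟩ | rfl)
                · exact h1
                · exact hxA
              · intro h1
                by_cases hv : v = x
                · exact Or.inr hv
                · exact Or.inl ⟨h1, hv⟩
            · rw [(mem_PermClass_iff.mp h).2.1]
              ext v
              simp only [Set.mem_union, Set.mem_diff, Set.mem_singleton_iff]
              constructor
              · rintro (⟨h1, -⟩ | rfl)
                · exact h1
                · exact hxA
              · intro h1
                by_cases hv : v = x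
                · exact Or.inr hv
                · exact Or.inl ⟨h1, hv⟩
          · rw [hfB]
            rcases hg with (h | h) | h
            · rw [(mem_PermClass_iff.mp h).2.2]
              ext v; simp only [Set.mem_diff, Set.mem_singleton_iff]
              exact ⟨fun h' => h'.1, fun h' => ⟨h', fun he => hxB (he ▸ h')⟩⟩
            · rw [(mem_PermClass_iff.mp h).2.2]
              ext v; simp only [Set.mem_diff, Set.mem_singleton_iff]
              exact ⟨fun h' => h'.1, fun h' => ⟨h', fun he => hxB (he ▸ h')⟩⟩
            · rw [(mem_PermClass_iff.mp h).2.2]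
              ext v
              simp only [Set.mem_diff, Set.mem_union, Set.mem_singleton_iff]
              constructor
              · rintro ⟨h1 | h1, hne⟩
                · exact h1
                · exact absurd h1 hne
              · intro h1
                exact ⟨Or.inl h1, fun he => hxB (he ▸ h1)⟩
        · rw [hpind, if_neg (by omega)]
          exact hq
        · show delF (posOf (m+1) (insF (q+1) g (m+1)) (m+1)) (insF (q+1) g (m+1)) = g
          rw [hpos]; exact hdel
    have hinj : Set.InjOn (fun f => delF (posOf (m+1) f (m+1)) f)
        {f | f ∈ PermClass (m+1) A B ∧ pind (m+1) f = x} := by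
      rintro f1 hf1 f2 hf2 he
      obtain ⟨p1, g1, ⟨hp11, hp12⟩, hg1, hfins1, hdel1, hpos1, hgx1, -, -⟩ := key f1 hf1
      obtain ⟨p2, g2, ⟨hp21, hp22⟩, hg2, hfins2, hdel2, hpos2, hgx2, -, -⟩ := key f2 hf2
      simp only [hpos1, hpos2, hdel1, hdel2] at he
      subst he
      have : p1 - 1 = p2 - 1 :=
        hg1.inj' (by omega) (by omega) (by omega) (by omega) (by rw [hgx1, hgx2])
      have hp : p1 = p2 := by omega
      rw [hfins1, hfins2, hp]
    rw [← Set.ncard_image_of_injOn hinj, himg]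
    have d12 : Disjoint (PermClass m A B) (PermClass m (A \ {x}) B) := by
      rw [Set.disjoint_left]
      intro g h1 h2
      have e1 := (mem_PermClass_iff.mp h1).2.1
      have e2 := (mem_PermClass_iff.mp h2).2.1
      rw [e1] at e2
      have : x ∈ A \ ({x} : Set ℕ) := e2 ▸ hxA
      simp at this
    have d13 : Disjoint (PermClass m A B) (PermClass m (A \ {x}) (B ∪ {x})) := by
      rw [Set.disjoint_left]
      intro g h1 h2
      have e1 := (mem_PermClass_iff.mp h1).2.1
      have e2 := (mem_PermClass_iff.mp h2).2.1
      rw [e1] at e2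
      have : x ∈ A \ ({x} : Set ℕ) := e2 ▸ hxA
      simp at this
    have d23 : Disjoint (PermClass m (A \ {x}) B) (PermClass m (A \ {x}) (B ∪ {x})) := by
      rw [Set.disjoint_left]
      intro g h1 h2
      have e1 := (mem_PermClass_iff.mp h1).2.2
      have e2 := (mem_PermClass_iff.mp h2).2.2
      rw [e1] at e2
      have : x ∈ B := e2 ▸ Or.inr rfl
      exact hxB this
    rw [ncard_union_three _ _ _ (PermClass_finite m A B) (PermClass_finite m _ B)
      (PermClass_finite m _ _) d12 d13 d23]
  · rw [if_neg hxA]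
    have hempty : {f | f ∈ PermClass (m+1) A B ∧ pind (m+1) f = x} = ∅ := by
      ext f
      simp only [Set.mem_setOf_eq, Set.mem_empty_iff_false, iff_false]
      intro hfb
      obtain ⟨p, g, -, -, -, -, -, -, hAeq, -⟩ := key f hfb
      exact hxA (by rw [hAeq]; exact Or.inr rfl)
    rw [hempty, Set.ncard_empty]

open Classical in
lemma pbucket_top (m : ℕ) (hm : 1 ≤ m) (A B : Set ℕ) :
    {f | f ∈ PermClass (m+1) A B ∧ pind (m+1) f = m}.ncard =
      if m ∈ B then (PermClass m A (B \ {m})).ncard else 0 := by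
  have hmsh : ∀ g : ℕ → ℕ, IsPermOn m g → m ∉ shAdjExp m g := by
    intro g hg h
    have := shAdj_sub hg m h
    omega
  have key : ∀ f ∈ {f | f ∈ PermClass (m+1) A B ∧ pind (m+1) f = m},
      ∃ p g, (2 ≤ p ∧ p ≤ m+1) ∧ IsPermOn m g ∧ f = insF p g (m+1) ∧ delF p f = g ∧
        posOf (m+1) f (m+1) = p ∧ g (p-1) = m ∧
        A = permAscBottomProper m g ∧ B = shAdjExp m g ∪ {m} := by
    rintro f ⟨hf, hind⟩
    obtain ⟨p, g, ⟨hp1, hp2⟩, hgperm, hfins, hdel, hpos, hpind, hval, hAeq, hBeq⟩ :=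
      perm_master hf
    have hp2' : 2 ≤ p := by
      by_contra h
      rw [hpind, if_pos (by omega)] at hind
      omega
    rw [hpind, if_neg (by omega)] at hind
    refine ⟨p, g, ⟨hp2', hp2⟩, hgperm, hfins, hdel, hpos, hind, ?_, ?_⟩
    · rw [hAeq]
      have : {v | 2 ≤ p ∧ v = g (p-1) ∧ g (p-1) < m} = ∅ := by
        ext v; simp only [Set.mem_setOf_eq, Set.mem_empty_iff_false, iff_false]
        rintro ⟨-, -, hlt⟩
        omega
      rw [this, Set.union_empty]
    · rw [hBeq]
      ext v
      simp only [Set.mem_union, Set.mem_diff, Set.mem_setOf_eq, Set.mem_singleton_iff]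
      constructor
      · rintro (⟨hv, -⟩ | ⟨-, hv, -⟩)
        · exact Or.inl hv
        · exact Or.inr (by rw [hv, hind])
      · rintro (hv | rfl)
        · refine Or.inl ⟨hv, ?_⟩
          rintro ⟨-, he⟩
          have := shAdj_sub hgperm v hv
          omega
        · exact Or.inr ⟨hp2', by rw [hind], hind⟩
  by_cases hmB : m ∈ B
  · rw [if_pos hmB]
    have himg : (fun f => delF (posOf (m+1) f (m+1)) f) ''
        {f | f ∈ PermClass (m+1) A B ∧ pind (m+1) f = m} = PermClass m A (B \ {m}) := by
      ext g
      constructor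
      · rintro ⟨f, hfb, rfl⟩
        obtain ⟨p, g', ⟨hp1, hp2⟩, hgperm, hfins, hdel, hpos, hgm, hAeq, hBeq⟩ := key f hfb
        show delF (posOf (m+1) f (m+1)) f ∈ _
        rw [hpos, hdel]
        refine mem_PermClass_iff.mpr ⟨hgperm, hAeq.symm, ?_⟩
        rw [hBeq]
        ext v
        simp only [Set.mem_diff, Set.mem_union, Set.mem_singleton_iff]
        constructor
        · intro hv
          refine ⟨Or.inl hv, ?_⟩
          intro he
          have := shAdj_sub hgperm v hv
          omega
        · rintro ⟨hv | rfl, hne⟩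
          · exact hv
          · exact absurd rfl hne
      · intro hg
        obtain ⟨hgperm, hAeq, hBeq⟩ := mem_PermClass_iff.mp hg
        obtain ⟨⟨hq1, hq2⟩, hgq⟩ := posOf_spec (hgperm.exists_pos (v := m) hm (le_refl m))
        set q := posOf m g m with hqdef
        obtain ⟨hmem, hpos, hpind, hdel⟩ := perm_ins hgperm (p := q + 1) (by omega) (by omega)
        have hq : g (q + 1 - 1) = m := by rw [Nat.add_sub_cancel]; exact hgq
        rw [mem_PermClass_iff] at hmem
        obtain ⟨hfperm, hfA, hfB⟩ := hmem
        refine ⟨insF (q+1) g (m+1), ⟨?_, ?_⟩, ?_⟩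
        · rw [mem_PermClass_iff]
          refine ⟨hfperm, ?_, ?_⟩
          · rw [hfA, hAeq]
            have : {v | 2 ≤ q + 1 ∧ v = g (q + 1 - 1) ∧ g (q + 1 - 1) < m} = ∅ := by
              ext v
              simp only [Set.mem_setOf_eq, Set.mem_empty_iff_false, iff_false]
              rintro ⟨-, -, hlt⟩
              omega
            rw [this, Set.union_empty]
          · rw [hfB, hBeq]
            ext v
            simp only [Set.mem_union, Set.mem_diff, Set.mem_setOf_eq, Set.mem_singleton_iff]
            constructor
            · rintro (⟨⟨hv, -⟩, -⟩ | ⟨-, hv, -⟩)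
              · exact hv
              · rw [hv, hq]; exact hmB
            · intro hv
              by_cases he : v = m
              · exact Or.inr ⟨by omega, by rw [he, hq], hq⟩
              · refine Or.inl ⟨⟨hv, he⟩, ?_⟩
                rintro ⟨-, h2⟩
                exact he (by rw [h2, hq])
        · rw [hpind, if_neg (by omega)]
          exact hq
        · show delF (posOf (m+1) (insF (q+1) g (m+1)) (m+1)) (insF (q+1) g (m+1)) = g
          rw [hpos]; exact hdel
    have hinj : Set.InjOn (fun f => delF (posOf (m+1) f (m+1)) f)
        {f | f ∈ PermClass (m+1) A B ∧ pind (m+1) f = m} := by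
      rintro f1 hf1 f2 hf2 he
      obtain ⟨p1, g1, ⟨hp11, hp12⟩, hg1, hfins1, hdel1, hpos1, hgx1, -, -⟩ := key f1 hf1
      obtain ⟨p2, g2, ⟨hp21, hp22⟩, hg2, hfins2, hdel2, hpos2, hgx2, -, -⟩ := key f2 hf2
      simp only [hpos1, hpos2, hdel1, hdel2] at he
      subst he
      have : p1 - 1 = p2 - 1 :=
        hg1.inj' (by omega) (by omega) (by omega) (by omega) (by rw [hgx1, hgx2])
      have hp : p1 = p2 := by omega
      rw [hfins1, hfins2, hp]
    rw [← Set.ncard_image_of_injOn hinj, himg]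
  · rw [if_neg hmB]
    have hempty : {f | f ∈ PermClass (m+1) A B ∧ pind (m+1) f = m} = ∅ := by
      ext f
      simp only [Set.mem_setOf_eq, Set.mem_empty_iff_false, iff_false]
      intro hfb
      obtain ⟨p, g, -, -, -, -, -, -, -, hBeq⟩ := key f hfb
      exact hmB (by rw [hBeq]; exact Or.inr rfl)
    rw [hempty, Set.ncard_empty]

open Classical in
lemma perm_count (k : ℕ) (A B : Set ℕ)
    (hA : A ⊆ Set.Icc 1 (k+2)) (hAB : Disjoint A B)
    (hnA : k + 2 ∉ A) (hmA : k + 1 ∉ A) :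
    (PermClass (k+2) A B).ncard =
      (PermClass (k+1) A B).ncard * (1 + A.ncard)
      + (if k + 1 ∈ B then (PermClass (k+1) A (B \ {k+1})).ncard else 0)
      + ∑ x ∈ Finset.Icc 1 k, (if x ∈ A then (PermClass (k+1) (A \ {x}) B).ncard
          + (PermClass (k+1) (A \ {x}) (B ∪ {x})).ncard else 0) := by
  have hAsub : A ⊆ ↑(Finset.Icc 1 k) := by
    intro a ha
    have := hA ha
    rw [Set.mem_Icc] at this
    rw [Finset.coe_Icc, Set.mem_Icc]
    rcases Nat.lt_or_ge a (k+1) with h | h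
    · exact ⟨this.1, by omega⟩
    · exfalso
      rcases Nat.lt_or_ge a (k+2) with h2 | h2
      · exact hmA (by rwa [(show a = k + 1 by omega)] at ha)
      · exact hnA (by rwa [(show a = k + 2 by omega)] at ha)
  have hmem : ∀ f ∈ PermClass (k+2) A B, pind (k+2) f ∈ Finset.range (k+2) := by
    intro f hf
    obtain ⟨p, g, ⟨hp1, hp2⟩, -, -, -, -, hpind, hval, -, -⟩ := perm_master (m := k+1) hf
    rw [Finset.mem_range, hpind]
    by_cases hp : p = 1
    · rw [if_pos hp]; omega
    · rw [if_neg hp]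
      have := hval (by omega)
      omega
  rw [ncard_fiberwise (PermClass (k+2) A B) (PermClass_finite _ _ _)
    (Finset.range (k+2)) (pind (k+2)) hmem]
  rw [Finset.sum_range_succ]
  have hins : Finset.range (k+1) = insert 0 (Finset.Icc 1 k) := by
    ext a
    simp only [Finset.mem_range, Finset.mem_insert, Finset.mem_Icc]
    omega
  rw [hins, Finset.sum_insert (by simp)]
  rw [pbucket_zero (k+1) A B, pbucket_top (k+1) (by omega) A B]
  have hmid : ∀ x ∈ Finset.Icc 1 k,
      {f | f ∈ PermClass (k+1+1) A B ∧ pind (k+1+1) f = x}.ncard =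
        (if x ∈ A then (PermClass (k+1) A B).ncard else 0) +
        (if x ∈ A then (PermClass (k+1) (A \ {x}) B).ncard
          + (PermClass (k+1) (A \ {x}) (B ∪ {x})).ncard else 0) := by
    intro x hx
    rw [Finset.mem_Icc] at hx
    rw [pbucket_mid (k+1) A B hAB (x := x) hx.1 (by omega)]
    by_cases hxA : x ∈ A
    · rw [if_pos hxA, if_pos hxA, if_pos hxA]; omega
    · rw [if_neg hxA, if_neg hxA, if_neg hxA]
  rw [Finset.sum_congr rfl hmid, Finset.sum_add_distrib,
    sum_ite_const_mem (Finset.Icc 1 k) A hAsub]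
  have : A.ncard * (PermClass (k+1) A B).ncard =
      (PermClass (k+1) A B).ncard * A.ncard := mul_comm _ _
  rw [this]
  ring
/-! ### Matching side -/

section MatSide

lemma mat_ext {n : ℕ} {M M' : Matching n} (h1 : M.opener = M'.opener)
    (h2 : M.closer = M'.closer) : M = M' := by
  cases M; cases M'; simp_all

/-- `p` is an opener position. -/
def IsOp {n : ℕ} (M : Matching n) (p : ℕ) : Prop := ∃ i, (1 ≤ i ∧ i ≤ n) ∧ M.opener i = p

/-- `p` is a closer position. -/
def IsCl {n : ℕ} (M : Matching n) (p : ℕ) : Prop := ∃ i, (1 ≤ i ∧ i ≤ n) ∧ M.closer i = p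

lemma op_mem {n : ℕ} (M : Matching n) {i : ℕ} (h1 : 1 ≤ i) (h2 : i ≤ n) :
    1 ≤ M.opener i ∧ M.opener i ≤ 2 * n := Set.mem_Icc.mp (M.opener_mem i h1 h2)

lemma cl_mem {n : ℕ} (M : Matching n) {i : ℕ} (h1 : 1 ≤ i) (h2 : i ≤ n) :
    1 ≤ M.closer i ∧ M.closer i ≤ 2 * n := Set.mem_Icc.mp (M.closer_mem i h1 h2)

lemma closer_inj {n : ℕ} (M : Matching n) {i j : ℕ} (hi1 : 1 ≤ i) (hi2 : i ≤ n)
    (hj1 : 1 ≤ j) (hj2 : j ≤ n) (h : M.closer i = M.closer j) : i = j := by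
  rcases lt_trichotomy i j with hlt | he | hlt
  · have := M.closer_mono i j hi1 hlt hj2; omega
  · exact he
  · have := M.closer_mono j i hj1 hlt hi2; omega

lemma cover' {n : ℕ} (M : Matching n) {p : ℕ} (h1 : 1 ≤ p) (h2 : p ≤ 2 * n) :
    IsOp M p ∨ IsCl M p := by
  obtain ⟨i, hi1, hi2, h⟩ := M.cover p (Set.mem_Icc.mpr ⟨h1, h2⟩)
  rcases h with h | h
  · exact Or.inl ⟨i, ⟨hi1, hi2⟩, h⟩
  · exact Or.inr ⟨i, ⟨hi1, hi2⟩, h⟩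

lemma not_op_and_cl {n : ℕ} (M : Matching n) {p : ℕ} (ho : IsOp M p) (hc : IsCl M p) :
    False := by
  obtain ⟨i, ⟨hi1, hi2⟩, hio⟩ := ho
  obtain ⟨j, ⟨hj1, hj2⟩, hjc⟩ := hc
  exact M.opener_ne_closer i j hi1 hi2 hj1 hj2 (by rw [hio, hjc])

lemma closer_top {n : ℕ} (M : Matching n) (hn : 1 ≤ n) : M.closer n = 2 * n := by
  obtain ⟨i, hi1, hi2, h⟩ := M.cover (2 * n) (Set.mem_Icc.mpr ⟨by omega, le_refl _⟩)
  rcases h with h | h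
  · have h1 := M.opener_lt_closer i hi1 hi2
    have h2 := cl_mem M hi1 hi2
    omega
  · rcases Nat.lt_or_ge i n with hlt | hge
    · have := M.closer_mono i n hi1 hlt (le_refl n)
      have := cl_mem M (show 1 ≤ n from hn) (le_refl n)
      omega
    · rwa [(show i = n by omega)] at h

lemma opener_bd {n : ℕ} (M : Matching n) {i : ℕ} (h1 : 1 ≤ i) (h2 : i ≤ n) :
    M.opener i ≤ 2 * n - 1 := by
  have := M.opener_lt_closer i h1 h2
  have := cl_mem M h1 h2
  omega

lemma closer_bd {n : ℕ} (M : Matching n) {i : ℕ} (h1 : 1 ≤ i) (h2 : i ≤ n) (h3 : i ≠ n) :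
    M.closer i ≤ 2 * n - 1 := by
  have hmono := M.closer_mono i n h1 (by omega) (le_refl n)
  rw [closer_top M (by omega)] at hmono
  omega

/-- Predecessor-closer: if `closer c = closer y + 1` then `c = y + 1`. -/
lemma closer_pred {n : ℕ} (M : Matching n) {y c : ℕ} (hy1 : 1 ≤ y) (hy2 : y ≤ n)
    (hc1 : 1 ≤ c) (hc2 : c ≤ n) (h : M.closer c = M.closer y + 1) : c = y + 1 := by
  have hyc : y < c := by
    rcases Nat.lt_or_ge y c with h' | h'
    · exact h'
    · rcases Nat.eq_or_lt_of_le h' with h'' | h''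
      · rw [h''] at h; omega
      · have := M.closer_mono c y hc1 h'' hy2; omega
  by_contra hne
  have h1 := M.closer_mono y (y+1) hy1 (by omega) (by omega)
  have h2 := M.closer_mono (y+1) c (by omega) (by omega) hc2
  omega

lemma Lcr_char {n : ℕ} {M : Matching n} (hM : M.NoLeftNesting) :
    M.LcrSet = {i | (1 ≤ i ∧ i ≤ n) ∧ IsOp M (M.opener i + 1)} := by
  ext i
  simp only [Matching.LcrSet, Set.mem_setOf_eq]
  constructor
  · rintro ⟨h1, h2, j, hj1, hj2, hje, -, -⟩
    exact ⟨⟨h1, h2⟩, j, ⟨hj1, hj2⟩, hje⟩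
  · rintro ⟨⟨h1, h2⟩, j, ⟨hj1, hj2⟩, hje⟩
    refine ⟨h1, h2, j, hj1, hj2, hje, ?_, ?_⟩
    · have := M.opener_lt_closer i h1 h2
      have := M.opener_ne_closer j i hj1 hj2 h1 h2
      omega
    · have hne : M.closer j ≠ M.closer i := by
        intro he
        have := closer_inj M hj1 hj2 h1 h2 he
        subst this
        omega
      have := hM j i hj1 hj2 h1 h2
      rw [not_and_or] at this
      rcases this with h' | h'
      · exact absurd hje h'
      · omega

lemma LRcr_char {n : ℕ} (M : Matching n) :
    M.LRcrSet = {i | 2 ≤ i ∧ i ≤ n ∧ M.opener i = M.opener (i-1) + 1 ∧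
      M.closer i = M.closer (i-1) + 1} := by
  ext i
  simp only [Matching.LRcrSet, Matching.RcrSet, Set.mem_setOf_eq]
  constructor
  · rintro ⟨⟨h1, h2, -, -, h5⟩, h6⟩
    exact ⟨h1, h2, h6, h5⟩
  · rintro ⟨h1, h2, h3, h4⟩
    refine ⟨⟨h1, h2, by omega, ?_, h4⟩, h3⟩
    have := M.opener_lt_closer i (by omega) h2
    have := M.opener_ne_closer i (i-1) (by omega) h2 (by omega) (by omega)
    omega

/-- Shifted double crossings. -/
def shB {n : ℕ} (M : Matching n) : Set ℕ := (fun i => i - 1) '' M.LRcrSet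

lemma shB_char {n : ℕ} (M : Matching n) :
    shB M = {y | 1 ≤ y ∧ y + 1 ≤ n ∧ M.opener (y+1) = M.opener y + 1 ∧
      M.closer (y+1) = M.closer y + 1} := by
  rw [shB, LRcr_char]
  ext y
  simp only [Set.mem_image, Set.mem_setOf_eq]
  constructor
  · rintro ⟨i, ⟨h1, h2, h3, h4⟩, rfl⟩
    rw [(show i - 1 + 1 = i by omega)]
    exact ⟨by omega, by omega, h3, h4⟩
  · rintro ⟨h1, h2, h3, h4⟩
    refine ⟨y + 1, ⟨by omega, by omega, ?_, ?_⟩, by omega⟩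
    · rwa [Nat.add_sub_cancel]
    · rwa [Nat.add_sub_cancel]

/-- Shifted right adjacencies. -/
def shRadj {n : ℕ} (M : Matching n) : Set ℕ :=
  {y | 1 ≤ y ∧ y + 1 ≤ n ∧ M.closer (y+1) = M.closer y + 1}

lemma shB_sub_shRadj {n : ℕ} (M : Matching n) : shB M ⊆ shRadj M := by
  rw [shB_char]
  rintro y ⟨h1, h2, -, h4⟩
  exact ⟨h1, h2, h4⟩

lemma shB_sub_Lcr {n : ℕ} {M : Matching n} (hM : M.NoLeftNesting) : shB M ⊆ M.LcrSet := by
  rw [shB_char, Lcr_char hM]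
  rintro y ⟨h1, h2, h3, -⟩
  exact ⟨⟨h1, by omega⟩, y + 1, ⟨by omega, h2⟩, h3⟩

lemma top_not_Lcr {n : ℕ} {M : Matching n} (hM : M.NoLeftNesting) (hn : 1 ≤ n) :
    n ∉ M.LcrSet := by
  rw [Lcr_char hM]
  rintro ⟨-, j, ⟨hj1, hj2⟩, hje⟩
  have hjn : j ≠ n := by
    intro h; rw [h] at hje; omega
  have hcl : M.closer j < M.closer n := M.closer_mono j n hj1 (by omega) (le_refl n)
  exact hM j n hj1 hj2 hn (le_refl n) ⟨hje, hcl⟩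

/-- The classes of matchings being counted. -/
def MatClass (n : ℕ) (A B : Set ℕ) : Set (Matching n) :=
  {M | M.NoLeftNesting ∧ M.LcrSet \ shB M = A ∧ shB M = B}

lemma matching_univ_finite (n : ℕ) : (Set.univ : Set (Matching n)).Finite := by
  have hinj : Set.InjOn (fun M : Matching n => (M.opener, M.closer)) Set.univ := by
    rintro M1 - M2 - h
    exact mat_ext (congrArg Prod.fst h) (congrArg Prod.snd h)
  apply Set.Finite.of_finite_image ?_ hinj
  apply Set.Finite.subset ((finite_pinned n (2*n)).prod (finite_pinned n (2*n)))
  rintro ⟨u, v⟩ ⟨M, -, heq⟩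
  have h1 : M.opener = u := congrArg Prod.fst heq
  have h2 : M.closer = v := congrArg Prod.snd heq
  subst h1; subst h2
  constructor
  · constructor
    · intro i
      show M.opener i ≤ 2 * n
      by_cases h : 1 ≤ i ∧ i ≤ n
      · exact (op_mem M h.1 h.2).2
      · rw [M.opener_eq_zero i (by rw [Set.mem_Icc]; omega)]; omega
    · intro i hi
      show M.opener i = 0
      exact M.opener_eq_zero i (by rw [Set.mem_Icc]; omega)
  · constructor
    · intro i
      show M.closer i ≤ 2 * n
      by_cases h : 1 ≤ i ∧ i ≤ n
      · exact (cl_mem M h.1 h.2).2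
      · rw [M.closer_eq_zero i (by rw [Set.mem_Icc]; omega)]; omega
    · intro i hi
      show M.closer i = 0
      exact M.closer_eq_zero i (by rw [Set.mem_Icc]; omega)

lemma MatClass_finite (n : ℕ) (A B : Set ℕ) : (MatClass n A B).Finite :=
  (matching_univ_finite n).subset (Set.subset_univ _)

lemma Lcr_sub {n : ℕ} (M : Matching n) : M.LcrSet ⊆ Set.Icc 1 n := by
  rintro i ⟨h1, h2, -⟩
  exact Set.mem_Icc.mpr ⟨h1, h2⟩

lemma shB_sub_Icc {n : ℕ} (M : Matching n) : shB M ⊆ Set.Icc 1 (n-1) := by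
  rw [shB_char]
  rintro y ⟨h1, h2, -, -⟩
  exact Set.mem_Icc.mpr ⟨h1, by omega⟩

/-- The second-largest arc is never in `Lcr ∖ shB`. -/
lemma sub_top_not_A {n : ℕ} {M : Matching n} (hM : M.NoLeftNesting) (hn : 2 ≤ n) :
    n - 1 ∉ M.LcrSet \ shB M := by
  rintro ⟨hl, hb⟩
  rw [Lcr_char hM] at hl
  obtain ⟨⟨h1, h2⟩, j, ⟨hj1, hj2⟩, hje⟩ := hl
  -- by no-left-nesting, j must be n
  have hjn : j = n := by
    by_contra hne
    have hne2 : j ≠ n - 1 := by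
      intro h; rw [h] at hje; omega
    have hcl : M.closer j < M.closer (n-1) := M.closer_mono j (n-1) hj1 (by omega) (by omega)
    exact hM j (n-1) hj1 hj2 (by omega) (by omega) ⟨hje, hcl⟩
  rw [hjn] at hje
  -- show closer (n-1) = 2n - 1, hence n-1 ∈ shB
  have hc1 : M.closer (n-1) = 2*n - 1 := by
    rcases cover' M (p := 2*n - 1) (by omega) (by omega) with h | h
    · obtain ⟨i, ⟨hi1, hi2⟩, hie⟩ := h
      -- an opener at 2n-1 must be arc n
      have hin : i = n := by
        by_contra hni
        have := M.opener_lt_closer i hi1 hi2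
        have := closer_bd M hi1 hi2 hni
        omega
      rw [hin] at hie
      -- opener n = 2n-1, so opener (n-1) = 2n-2, closer (n-1) > 2n-2, impossible
      exfalso
      rw [hie] at hje
      have h3 := M.opener_lt_closer (n-1) (by omega) (by omega)
      have h4 := closer_bd M (show 1 ≤ n-1 by omega) (by omega) (by omega)
      have h5 : M.closer (n-1) ≠ 2*n - 1 := by
        intro he
        exact M.opener_ne_closer n (n-1) (by omega) (le_refl n) (by omega) (by omega)
          (by omega)
      omega
    · obtain ⟨i, ⟨hi1, hi2⟩, hie⟩ := h
      have hin : i = n - 1 := by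
        have hlt : i ≠ n := by
          intro h
          rw [h, closer_top M (by omega)] at hie
          omega
        by_contra hni
        have := M.closer_mono i (n-1) hi1 (by omega) (by omega)
        have := closer_bd M (show 1 ≤ n - 1 by omega) (by omega) (by omega)
        omega
      rwa [hin] at hie
  apply hb
  rw [shB_char]
  refine ⟨by omega, by omega, ?_, ?_⟩
  · rw [(show n - 1 + 1 = n by omega)]
    exact hje
  · rw [(show n - 1 + 1 = n by omega), closer_top M (by omega)]
    omega

end MatSide

section MatSide2

/-- upward shift at `o`. -/
def shU (o q : ℕ) : ℕ := if q < o then q else q + 1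
/-- downward shift at `o`. -/
def shD (o q : ℕ) : ℕ := if q < o then q else q - 1

lemma shU_lt_iff (o a b : ℕ) : shU o a < shU o b ↔ a < b := by
  unfold shU; split_ifs <;> omega
lemma shU_inj {o a b : ℕ} (h : shU o a = shU o b) : a = b := by
  unfold shU at h; split_ifs at h <;> omega
lemma shU_ne (o a : ℕ) : shU o a ≠ o := by
  unfold shU; split_ifs <;> omega
lemma shU_ge1 {o a : ℕ} (h : 1 ≤ a) : 1 ≤ shU o a := by
  unfold shU; split_ifs <;> omega
lemma shU_le {o a c : ℕ} (h : a ≤ c) : shU o a ≤ c + 1 := by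
  unfold shU; split_ifs <;> omega
lemma shD_shU (o a : ℕ) : shD o (shU o a) = a := by
  unfold shU shD; split_ifs <;> omega
lemma shU_shD {o q : ℕ} (h : q ≠ o) : shU o (shD o q) = q := by
  unfold shU shD; split_ifs <;> omega
lemma shU_adj_gap (o a b : ℕ) : shU o b = shU o a + 1 ↔ (b = a + 1 ∧ a + 1 ≠ o) := by
  unfold shU; split_ifs <;> omega
lemma shU_succ (o b : ℕ) : shU o b = o + 1 ↔ b = o := by
  unfold shU; split_ifs <;> omega
lemma shU_osub (o a : ℕ) : shU o a + 1 = o ↔ a + 1 = o := by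
  unfold shU; split_ifs <;> omega
lemma shD_lt_iff {o a b : ℕ} (ha : a ≠ o) (hb : b ≠ o) : shD o a < shD o b ↔ a < b := by
  unfold shD; split_ifs <;> omega
lemma shD_inj {o a b : ℕ} (ha : a ≠ o) (hb : b ≠ o) (h : shD o a = shD o b) : a = b := by
  unfold shD at h; split_ifs at h <;> omega
lemma shD_bounds {o q m : ℕ} (ho : 1 ≤ o) (ho' : o ≤ 2*m+1) (h1 : 1 ≤ q) (h2 : q ≤ 2*m+1) (h3 : q ≠ o) :
    1 ≤ shD o q ∧ shD o q ≤ 2*m := by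
  unfold shD; split_ifs <;> omega
lemma shD_adj_cases {o a b : ℕ} (ha : a ≠ o) (hb : b ≠ o) (h : shD o a = shD o b + 1) :
    a = b + 1 ∨ (a = b + 2 ∧ o = b + 1) := by
  unfold shD at h; split_ifs at h <;> omega

def insOp {m : ℕ} (M' : Matching m) (o : ℕ) : ℕ → ℕ :=
  fun i => if 1 ≤ i ∧ i ≤ m then shU o (M'.opener i) else if i = m+1 then o else 0
def insCl {m : ℕ} (M' : Matching m) (o : ℕ) : ℕ → ℕ :=
  fun i => if 1 ≤ i ∧ i ≤ m then shU o (M'.closer i) else if i = m+1 then 2*(m+1) else 0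

lemma insOp_mid {m : ℕ} {M' : Matching m} {o i : ℕ} (h1 : 1 ≤ i) (h2 : i ≤ m) :
    insOp M' o i = shU o (M'.opener i) := by
  unfold insOp; rw [if_pos ⟨h1, h2⟩]
lemma insOp_top {m : ℕ} {M' : Matching m} {o : ℕ} : insOp M' o (m+1) = o := by
  unfold insOp; rw [if_neg (by omega), if_pos rfl]
lemma insOp_out {m : ℕ} {M' : Matching m} {o i : ℕ} (h : ¬(1 ≤ i ∧ i ≤ m + 1)) :
    insOp M' o i = 0 := by
  unfold insOp; rw [if_neg (by omega), if_neg (by omega)]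
lemma insCl_mid {m : ℕ} {M' : Matching m} {o i : ℕ} (h1 : 1 ≤ i) (h2 : i ≤ m) :
    insCl M' o i = shU o (M'.closer i) := by
  unfold insCl; rw [if_pos ⟨h1, h2⟩]
lemma insCl_top {m : ℕ} {M' : Matching m} {o : ℕ} : insCl M' o (m+1) = 2*(m+1) := by
  unfold insCl; rw [if_neg (by omega), if_pos rfl]
lemma insCl_out {m : ℕ} {M' : Matching m} {o i : ℕ} (h : ¬(1 ≤ i ∧ i ≤ m + 1)) :
    insCl M' o i = 0 := by
  unfold insCl; rw [if_neg (by omega), if_neg (by omega)]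

/-- Insert a new maximal arc with opener at position `o` and closer at the end. -/
def insM {m : ℕ} (M' : Matching m) (o : ℕ) (ho1 : 1 ≤ o) (ho2 : o ≤ 2*m+1) :
    Matching (m+1) where
  opener := insOp M' o
  closer := insCl M' o
  opener_lt_closer := by
    intro i h1 h2
    by_cases him : i ≤ m
    · rw [insOp_mid h1 him, insCl_mid h1 him]
      exact (shU_lt_iff _ _ _).mpr (M'.opener_lt_closer i h1 him)
    · rw [(show i = m + 1 by omega), insOp_top, insCl_top]
      omega
  closer_mono := by
    intro i j h1 hij hj
    by_cases hjm : j ≤ m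
    · rw [insCl_mid h1 (by omega), insCl_mid (by omega) hjm]
      exact (shU_lt_iff _ _ _).mpr (M'.closer_mono i j h1 hij hjm)
    · rw [(show j = m + 1 by omega), insCl_top, insCl_mid h1 (by omega)]
      have := (cl_mem M' h1 (by omega)).2
      have := shU_le (o := o) this
      omega
  opener_mem := by
    intro i h1 h2
    rw [Set.mem_Icc]
    by_cases him : i ≤ m
    · rw [insOp_mid h1 him]
      have h3 := op_mem M' h1 him
      have := shU_ge1 (o := o) h3.1
      have := shU_le (o := o) h3.2
      omega
    · rw [(show i = m + 1 by omega), insOp_top]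
      omega
  closer_mem := by
    intro i h1 h2
    rw [Set.mem_Icc]
    by_cases him : i ≤ m
    · rw [insCl_mid h1 him]
      have h3 := cl_mem M' h1 him
      have := shU_ge1 (o := o) h3.1
      have := shU_le (o := o) h3.2
      omega
    · rw [(show i = m + 1 by omega), insCl_top]
      omega
  opener_inj := by
    intro i j h1 h2 h3 h4 he
    by_cases him : i ≤ m <;> by_cases hjm : j ≤ m
    · rw [insOp_mid h1 him, insOp_mid h3 hjm] at he
      exact M'.opener_inj i j h1 him h3 hjm (shU_inj he)
    · rw [insOp_mid h1 him, (show j = m + 1 by omega), insOp_top] at he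
      exact absurd he (shU_ne o _)
    · rw [(show i = m + 1 by omega), insOp_top, insOp_mid h3 hjm] at he
      exact absurd he.symm (shU_ne o _)
    · omega
  opener_ne_closer := by
    intro i j h1 h2 h3 h4 he
    by_cases him : i ≤ m <;> by_cases hjm : j ≤ m
    · rw [insOp_mid h1 him, insCl_mid h3 hjm] at he
      exact M'.opener_ne_closer i j h1 him h3 hjm (shU_inj he ▸ rfl)
    · rw [insOp_mid h1 him, (show j = m + 1 by omega), insCl_top] at he
      have := (op_mem M' h1 him).2
      have := shU_le (o := o) this
      omega
    · rw [(show i = m + 1 by omega), insOp_top, insCl_mid h3 hjm] at he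
      exact absurd he.symm (shU_ne o _)
    · rw [(show i = m + 1 by omega), insOp_top, (show j = m + 1 by omega), insCl_top] at he
      omega
  cover := by
    intro p hp
    rw [Set.mem_Icc] at hp
    by_cases hp2 : p = 2*(m+1)
    · exact ⟨m+1, by omega, by omega, Or.inr (by rw [insCl_top, hp2])⟩
    · by_cases hpo : p = o
      · exact ⟨m+1, by omega, by omega, Or.inl (by rw [insOp_top, hpo])⟩
      · have hq : 1 ≤ shD o p ∧ shD o p ≤ 2*m := shD_bounds ho1 ho2 hp.1 (by omega) hpo
        obtain ⟨i, hi1, hi2, hio⟩ := M'.cover (shD o p) (Set.mem_Icc.mpr hq)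
        refine ⟨i, hi1, by omega, ?_⟩
        rcases hio with hio | hio
        · exact Or.inl (by rw [insOp_mid hi1 hi2, hio, shU_shD hpo])
        · exact Or.inr (by rw [insCl_mid hi1 hi2, hio, shU_shD hpo])
  opener_eq_zero := by
    intro i hi
    rw [Set.mem_Icc] at hi
    exact insOp_out (by omega)
  closer_eq_zero := by
    intro i hi
    rw [Set.mem_Icc] at hi
    exact insCl_out (by omega)

lemma insM_opener_mid {m : ℕ} {M' : Matching m} {o : ℕ} {ho1 ho2} {i : ℕ}
    (h1 : 1 ≤ i) (h2 : i ≤ m) :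
    (insM M' o ho1 ho2).opener i = shU o (M'.opener i) := insOp_mid h1 h2
lemma insM_opener_top {m : ℕ} {M' : Matching m} {o : ℕ} {ho1 ho2} :
    (insM M' o ho1 ho2).opener (m+1) = o := insOp_top
lemma insM_closer_mid {m : ℕ} {M' : Matching m} {o : ℕ} {ho1 ho2} {i : ℕ}
    (h1 : 1 ≤ i) (h2 : i ≤ m) :
    (insM M' o ho1 ho2).closer i = shU o (M'.closer i) := insCl_mid h1 h2
lemma insM_closer_top {m : ℕ} {M' : Matching m} {o : ℕ} {ho1 ho2} :
    (insM M' o ho1 ho2).closer (m+1) = 2*(m+1) := insCl_top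

/-- validity of the insertion position: the point at `o` in `M'` (if any) is a closer. -/
def InsValid {m : ℕ} (M' : Matching m) (o : ℕ) : Prop :=
  o = 2*m+1 ∨ ∃ c, (1 ≤ c ∧ c ≤ m) ∧ M'.closer c = o

lemma InsValid.not_op {m : ℕ} {M' : Matching m} {o : ℕ} (h : InsValid M' o) :
    ∀ i, 1 ≤ i → i ≤ m → M'.opener i ≠ o := by
  intro i h1 h2 he
  rcases h with h | ⟨c, ⟨hc1, hc2⟩, hce⟩
  · have := opener_bd M' h1 h2
    omega
  · exact M'.opener_ne_closer i c h1 h2 hc1 hc2 (by rw [he, hce])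

lemma insM_NLN {m : ℕ} {M' : Matching m} (hM' : M'.NoLeftNesting) {o : ℕ}
    {ho1 : 1 ≤ o} {ho2 : o ≤ 2*m+1} (hval : InsValid M' o) :
    (insM M' o ho1 ho2).NoLeftNesting := by
  have hocc := hval.not_op
  rintro i j hi1 hi2 hj1 hj2 ⟨hadj, hlt⟩
  by_cases him : i ≤ m
  · by_cases hjm : j ≤ m
    · rw [insM_opener_mid hi1 him, insM_opener_mid hj1 hjm] at hadj
      rw [insM_closer_mid hi1 him, insM_closer_mid hj1 hjm, shU_lt_iff] at hlt
      have := (shU_adj_gap o _ _).mp hadj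
      exact hM' i j hi1 him hj1 hjm ⟨this.1, hlt⟩
    · rw [insM_opener_mid hi1 him, (show j = m + 1 by omega), insM_opener_top] at hadj
      exact hocc i hi1 him ((shU_succ o _).mp hadj)
  · rw [(show i = m + 1 by omega), insM_closer_top] at hlt
    by_cases hjm : j ≤ m
    · rw [insM_closer_mid hj1 hjm] at hlt
      have := (cl_mem M' hj1 hjm).2
      have := shU_le (o := o) this
      omega
    · rw [(show j = m + 1 by omega), insM_closer_top] at hlt
      omega

def delOp {m : ℕ} (M : Matching (m+1)) : ℕ → ℕ :=
  fun i => if 1 ≤ i ∧ i ≤ m then shD (M.opener (m+1)) (M.opener i) else 0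
def delCl {m : ℕ} (M : Matching (m+1)) : ℕ → ℕ :=
  fun i => if 1 ≤ i ∧ i ≤ m then shD (M.opener (m+1)) (M.closer i) else 0

lemma delOp_mid {m : ℕ} {M : Matching (m+1)} {i : ℕ} (h1 : 1 ≤ i) (h2 : i ≤ m) :
    delOp M i = shD (M.opener (m+1)) (M.opener i) := by
  unfold delOp; rw [if_pos ⟨h1, h2⟩]
lemma delCl_mid {m : ℕ} {M : Matching (m+1)} {i : ℕ} (h1 : 1 ≤ i) (h2 : i ≤ m) :
    delCl M i = shD (M.opener (m+1)) (M.closer i) := by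
  unfold delCl; rw [if_pos ⟨h1, h2⟩]

lemma del_op_ne {m : ℕ} (M : Matching (m+1)) {i : ℕ} (h1 : 1 ≤ i) (h2 : i ≤ m) :
    M.opener i ≠ M.opener (m+1) := by
  intro he
  have := M.opener_inj i (m+1) h1 (by omega) (by omega) (by omega) he
  omega
lemma del_cl_ne {m : ℕ} (M : Matching (m+1)) {i : ℕ} (h1 : 1 ≤ i) (h2 : i ≤ m) :
    M.closer i ≠ M.opener (m+1) :=
  fun he => M.opener_ne_closer (m+1) i (by omega) (by omega) h1 (by omega) he.symm

lemma del_o_bounds {m : ℕ} (M : Matching (m+1)) :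
    1 ≤ M.opener (m+1) ∧ M.opener (m+1) ≤ 2*m+1 := by
  have h1 := op_mem M (show 1 ≤ m+1 by omega) (le_refl (m+1))
  have h2 := opener_bd M (show 1 ≤ m+1 by omega) (le_refl (m+1))
  omega

/-- Delete the arc `m+1`. -/
def delM {m : ℕ} (M : Matching (m+1)) : Matching m where
  opener := delOp M
  closer := delCl M
  opener_lt_closer := by
    intro i h1 h2
    rw [delOp_mid h1 h2, delCl_mid h1 h2,
      shD_lt_iff (del_op_ne M h1 h2) (del_cl_ne M h1 h2)]
    exact M.opener_lt_closer i h1 (by omega)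
  closer_mono := by
    intro i j h1 hij hj
    rw [delCl_mid h1 (by omega), delCl_mid (by omega) hj,
      shD_lt_iff (del_cl_ne M h1 (by omega)) (del_cl_ne M (by omega) hj)]
    exact M.closer_mono i j h1 hij (by omega)
  opener_mem := by
    intro i h1 h2
    rw [Set.mem_Icc, delOp_mid h1 h2]
    exact shD_bounds (del_o_bounds M).1 (del_o_bounds M).2 (op_mem M h1 (by omega)).1
      (opener_bd M h1 (by omega)) (del_op_ne M h1 h2)
  closer_mem := by
    intro i h1 h2
    rw [Set.mem_Icc, delCl_mid h1 h2]
    exact shD_bounds (del_o_bounds M).1 (del_o_bounds M).2 (cl_mem M h1 (by omega)).1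
      (closer_bd M h1 (by omega) (by omega)) (del_cl_ne M h1 h2)
  opener_inj := by
    intro i j h1 h2 h3 h4 he
    rw [delOp_mid h1 h2, delOp_mid h3 h4] at he
    exact M.opener_inj i j h1 (by omega) h3 (by omega)
      (shD_inj (del_op_ne M h1 h2) (del_op_ne M h3 h4) he)
  opener_ne_closer := by
    intro i j h1 h2 h3 h4 he
    rw [delOp_mid h1 h2, delCl_mid h3 h4] at he
    exact M.opener_ne_closer i j h1 (by omega) h3 (by omega)
      (shD_inj (del_op_ne M h1 h2) (del_cl_ne M h3 h4) he)
  cover := by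
    intro p hp
    rw [Set.mem_Icc] at hp
    set o := M.opener (m+1) with hodef
    have hne := shU_ne o p
    have hbd : 1 ≤ shU o p ∧ shU o p ≤ 2*m+1 := by
      have := shU_ge1 (o := o) hp.1
      have := shU_le (o := o) hp.2
      omega
    obtain ⟨i, hi1, hi2, hio⟩ := M.cover (shU o p) (Set.mem_Icc.mpr ⟨hbd.1, by omega⟩)
    have him : i ≤ m := by
      by_contra h
      have hieq : i = m + 1 := by omega
      rcases hio with hio | hio
      · rw [hieq, ← hodef] at hio
        exact hne hio.symm
      · rw [hieq, closer_top M (by omega)] at hio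
        omega
    refine ⟨i, hi1, him, ?_⟩
    rcases hio with hio | hio
    · exact Or.inl (by rw [delOp_mid hi1 him, hio, ← hodef, shD_shU])
    · exact Or.inr (by rw [delCl_mid hi1 him, hio, ← hodef, shD_shU])
  opener_eq_zero := by
    intro i hi
    rw [Set.mem_Icc] at hi
    unfold delOp
    rw [if_neg (by omega)]
  closer_eq_zero := by
    intro i hi
    rw [Set.mem_Icc] at hi
    unfold delCl
    rw [if_neg (by omega)]

lemma delM_NLN {m : ℕ} {M : Matching (m+1)} (hM : M.NoLeftNesting) :
    (delM M).NoLeftNesting := by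
  rintro i j hi1 hi2 hj1 hj2 ⟨hadj, hlt⟩
  have ha := del_op_ne M hi1 hi2
  have hb := del_op_ne M hj1 hj2
  show False
  rw [(show (delM M).opener i = delOp M i from rfl),
    (show (delM M).opener j = delOp M j from rfl), delOp_mid hi1 hi2, delOp_mid hj1 hj2] at hadj
  rw [(show (delM M).closer i = delCl M i from rfl),
    (show (delM M).closer j = delCl M j from rfl), delCl_mid hi1 hi2, delCl_mid hj1 hj2,
    shD_lt_iff (del_cl_ne M hi1 hi2) (del_cl_ne M hj1 hj2)] at hlt
  rcases shD_adj_cases ha hb hadj with h | ⟨h1, h2⟩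
  · exact hM i j hi1 (by omega) hj1 (by omega) ⟨h, hlt⟩
  · refine hM i (m+1) hi1 (by omega) (by omega) (by omega) ⟨by omega, ?_⟩
    rw [closer_top M (by omega)]
    have := closer_bd M hi1 (show i ≤ m+1 by omega) (show i ≠ m+1 by omega)
    omega

lemma delM_insM {m : ℕ} (M' : Matching m) (o : ℕ) (ho1 : 1 ≤ o) (ho2 : o ≤ 2*m+1) :
    delM (insM M' o ho1 ho2) = M' := by
  apply mat_ext <;> funext i
  · show delOp _ i = M'.opener i
    by_cases h : 1 ≤ i ∧ i ≤ m
    · rw [delOp_mid h.1 h.2, insM_opener_top, insM_opener_mid h.1 h.2, shD_shU]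
    · unfold delOp
      rw [if_neg h, M'.opener_eq_zero i (by rw [Set.mem_Icc]; omega)]
  · show delCl _ i = M'.closer i
    by_cases h : 1 ≤ i ∧ i ≤ m
    · rw [delCl_mid h.1 h.2, insM_opener_top, insM_closer_mid h.1 h.2, shD_shU]
    · unfold delCl
      rw [if_neg h, M'.closer_eq_zero i (by rw [Set.mem_Icc]; omega)]

lemma insM_delM {m : ℕ} (M : Matching (m+1)) (ho1 : 1 ≤ M.opener (m+1))
    (ho2 : M.opener (m+1) ≤ 2*m+1) :
    insM (delM M) (M.opener (m+1)) ho1 ho2 = M := by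
  apply mat_ext <;> funext i
  · show insOp _ _ i = M.opener i
    rcases Nat.lt_trichotomy i (m+1) with h | h | h
    · by_cases h0 : 1 ≤ i
      · rw [insOp_mid h0 (by omega), (show (delM M).opener i = delOp M i from rfl),
          delOp_mid h0 (by omega), shU_shD (del_op_ne M h0 (by omega))]
      · rw [insOp_out (by omega), M.opener_eq_zero i (by rw [Set.mem_Icc]; omega)]
    · rw [h, insOp_top]
    · rw [insOp_out (by omega), M.opener_eq_zero i (by rw [Set.mem_Icc]; omega)]
  · show insCl _ _ i = M.closer i
    rcases Nat.lt_trichotomy i (m+1) with h | h | h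
    · by_cases h0 : 1 ≤ i
      · rw [insCl_mid h0 (by omega), (show (delM M).closer i = delCl M i from rfl),
          delCl_mid h0 (by omega), shU_shD (del_cl_ne M h0 (by omega))]
      · rw [insCl_out (by omega), M.closer_eq_zero i (by rw [Set.mem_Icc]; omega)]
    · rw [h, insCl_top, closer_top M (by omega)]
    · rw [insCl_out (by omega), M.closer_eq_zero i (by rw [Set.mem_Icc]; omega)]

end MatSide2

section MatSide3

lemma top_opener_ge_two {m : ℕ} (hm : 1 ≤ m) {M : Matching (m+1)}
    (hM : M.NoLeftNesting) : 2 ≤ M.opener (m+1) := by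
  by_contra h
  have ho1 : M.opener (m+1) = 1 := by
    have := (op_mem M (show 1 ≤ m+1 by omega) (le_refl _)).1
    omega
  rcases cover' M (p := 2) (by omega) (by omega) with ⟨j, ⟨hj1, hj2⟩, hje⟩ | ⟨j, ⟨hj1, hj2⟩, hje⟩
  · have hjm : j ≤ m := by
      by_contra hc
      have : j = m + 1 := by omega
      rw [this, ho1] at hje
      omega
    refine hM j (m+1) hj1 (by omega) (by omega) (by omega) ⟨by omega, ?_⟩
    rw [closer_top M (by omega)]
    have := closer_bd M hj1 (show j ≤ m+1 by omega) (by omega)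
    omega
  · have hjo : M.opener j = 1 := by
      have := M.opener_lt_closer j hj1 hj2
      have := (op_mem M hj1 hj2).1
      omega
    have : j = m + 1 := M.opener_inj j (m+1) hj1 hj2 (by omega) (by omega) (by rw [hjo, ho1])
    rw [this, closer_top M (by omega)] at hje
    omega

lemma mat_master {m : ℕ} (hm : 1 ≤ m) {M : Matching (m+1)} (hM : M.NoLeftNesting) :
    ∃ (o : ℕ) (ho1 : 1 ≤ o) (ho2 : o ≤ 2*m+1),
      M.opener (m+1) = o ∧ 2 ≤ o ∧ (delM M).NoLeftNesting ∧
      InsValid (delM M) o ∧ M = insM (delM M) o ho1 ho2 := by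
  obtain ⟨ho1, ho2⟩ := del_o_bounds M
  refine ⟨M.opener (m+1), ho1, ho2, rfl, top_opener_ge_two hm hM, delM_NLN hM, ?_,
    (insM_delM M ho1 ho2).symm⟩
  by_cases h : M.opener (m+1) = 2*m+1
  · exact Or.inl h
  · right
    rcases cover' M (p := M.opener (m+1) + 1) (by omega) (by omega) with
      ⟨j, ⟨hj1, hj2⟩, hje⟩ | ⟨c, ⟨hc1, hc2⟩, hce⟩
    · exfalso
      have hjm : j ≤ m := by
        by_contra hc
        have : j = m+1 := by omega
        rw [this] at hje
        omega
      refine hM j (m+1) hj1 (by omega) (by omega) (by omega) ⟨by omega, ?_⟩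
      rw [closer_top M (by omega)]
      have := closer_bd M hj1 (show j ≤ m+1 by omega) (by omega)
      omega
    · have hcm : c ≤ m := by
        by_contra hcm
        have : c = m+1 := by omega
        rw [this, closer_top M (by omega)] at hce
        omega
      refine ⟨c, ⟨hc1, hcm⟩, ?_⟩
      show delCl M c = M.opener (m+1)
      rw [delCl_mid hc1 hcm, hce]
      unfold shD
      rw [if_neg (by omega)]
      omega

lemma Lcr_insM {m : ℕ} {M' : Matching m} (hM' : M'.NoLeftNesting) {o : ℕ}
    {ho1 : 1 ≤ o} {ho2 : o ≤ 2*m+1} (hval : InsValid M' o) :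
    (insM M' o ho1 ho2).LcrSet =
      M'.LcrSet ∪ {i | (1 ≤ i ∧ i ≤ m) ∧ M'.opener i + 1 = o} := by
  have hN := insM_NLN (ho1 := ho1) (ho2 := ho2) hM' hval
  have hocc := hval.not_op
  rw [Lcr_char hN, Lcr_char hM']
  ext i
  simp only [Set.mem_union, Set.mem_setOf_eq]
  constructor
  · rintro ⟨⟨h1, h2⟩, j, ⟨hj1, hj2⟩, hje⟩
    by_cases him : i ≤ m
    · rw [insM_opener_mid h1 him] at hje
      by_cases hjm : j ≤ m
      · rw [insM_opener_mid hj1 hjm] at hje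
        exact Or.inl ⟨⟨h1, him⟩, j, ⟨hj1, hjm⟩, ((shU_adj_gap o _ _).mp hje).1⟩
      · rw [(show j = m+1 by omega), insM_opener_top] at hje
        exact Or.inr ⟨⟨h1, him⟩, (shU_osub o _).mp hje.symm⟩
    · exfalso
      rw [(show i = m+1 by omega), insM_opener_top] at hje
      by_cases hjm : j ≤ m
      · rw [insM_opener_mid hj1 hjm] at hje
        exact hocc j hj1 hjm ((shU_succ o _).mp hje)
      · rw [(show j = m+1 by omega), insM_opener_top] at hje
        omega
  · rintro (⟨⟨h1, h2⟩, j, ⟨hj1, hj2⟩, hje⟩ | ⟨⟨h1, h2⟩, hje⟩)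
    · refine ⟨⟨h1, by omega⟩, j, ⟨hj1, by omega⟩, ?_⟩
      rw [insM_opener_mid h1 h2, insM_opener_mid hj1 hj2, shU_adj_gap]
      exact ⟨hje, fun he => hocc j hj1 hj2 (by omega)⟩
    · refine ⟨⟨h1, by omega⟩, m+1, ⟨by omega, le_refl _⟩, ?_⟩
      rw [insM_opener_mid h1 h2, insM_opener_top]
      exact ((shU_osub o _).mpr hje).symm

open Classical in
lemma shB_insM {m : ℕ} (hm : 1 ≤ m) {M' : Matching m} (hM' : M'.NoLeftNesting) {o : ℕ}
    {ho1 : 1 ≤ o} {ho2 : o ≤ 2*m+1} (hval : InsValid M' o) :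
    shB (insM M' o ho1 ho2) = {y | y ∈ shB M' ∧ M'.closer y + 1 ≠ o} ∪
      (if M'.opener m + 1 = o then {m} else ∅) := by
  have hocc := hval.not_op
  rw [shB_char, shB_char]
  ext y
  simp only [Set.mem_union, Set.mem_setOf_eq]
  by_cases hym : y + 1 ≤ m
  · constructor
    · rintro ⟨h1, h2, hop, hcl⟩
      rw [insM_opener_mid (by omega) hym, insM_opener_mid h1 (by omega)] at hop
      rw [insM_closer_mid (by omega) hym, insM_closer_mid h1 (by omega)] at hcl
      exact Or.inl ⟨⟨h1, hym, ((shU_adj_gap o _ _).mp hop).1,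
        ((shU_adj_gap o _ _).mp hcl).1⟩, ((shU_adj_gap o _ _).mp hcl).2⟩
    · rintro (⟨⟨h1, h2, hop, hcl⟩, hne⟩ | hy)
      · refine ⟨h1, by omega, ?_, ?_⟩
        · rw [insM_opener_mid (by omega) hym, insM_opener_mid h1 (by omega), shU_adj_gap]
          exact ⟨hop, fun he => hocc (y+1) (by omega) hym (by omega)⟩
        · rw [insM_closer_mid (by omega) hym, insM_closer_mid h1 (by omega), shU_adj_gap]
          exact ⟨hcl, hne⟩
      · exfalso
        by_cases ho : M'.opener m + 1 = o
        · rw [if_pos ho] at hy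
          rw [Set.mem_singleton_iff] at hy
          omega
        · rw [if_neg ho] at hy
          simp at hy
  · constructor
    · rintro ⟨h1, h2, hop, hcl⟩
      have hy : y = m := by omega
      rw [hy] at hop
      rw [insM_opener_top, insM_opener_mid (by omega) (le_refl m)] at hop
      right
      rw [if_pos ((shU_osub o _).mp hop.symm)]
      rw [Set.mem_singleton_iff]
      exact hy
    · rintro (⟨⟨h1, h2, hop, hcl⟩, hne⟩ | hy)
      · omega
      · by_cases ho : M'.opener m + 1 = o
        · rw [if_pos ho, Set.mem_singleton_iff] at hy
          rw [hy]
          refine ⟨by omega, by omega, ?_, ?_⟩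
          · rw [insM_opener_top, insM_opener_mid (by omega) (le_refl m)]
            exact ((shU_osub o _).mpr ho).symm
          · rw [insM_closer_top, insM_closer_mid (by omega) (le_refl m), closer_top M' hm]
            have := opener_bd M' (show 1 ≤ m by omega) (le_refl m)
            unfold shU
            rw [if_neg (by omega)]
            omega
        · rw [if_neg ho] at hy
          simp at hy

end MatSide3

section MatSide4

open Classical in
noncomputable def arcOp {k : ℕ} (M : Matching k) (p : ℕ) : ℕ :=
  if h : ∃ i, (1 ≤ i ∧ i ≤ k) ∧ M.opener i = p then h.choose else 0
open Classical in
noncomputable def arcCl {k : ℕ} (M : Matching k) (p : ℕ) : ℕ :=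
  if h : ∃ i, (1 ≤ i ∧ i ≤ k) ∧ M.closer i = p then h.choose else 0

lemma arcOp_spec {k : ℕ} {M : Matching k} {p : ℕ} (h : IsOp M p) :
    (1 ≤ arcOp M p ∧ arcOp M p ≤ k) ∧ M.opener (arcOp M p) = p := by
  have h' : ∃ i, (1 ≤ i ∧ i ≤ k) ∧ M.opener i = p := h
  unfold arcOp
  rw [dif_pos h']
  exact h'.choose_spec

lemma arcCl_spec {k : ℕ} {M : Matching k} {p : ℕ} (h : IsCl M p) :
    (1 ≤ arcCl M p ∧ arcCl M p ≤ k) ∧ M.closer (arcCl M p) = p := by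
  have h' : ∃ i, (1 ≤ i ∧ i ≤ k) ∧ M.closer i = p := h
  unfold arcCl
  rw [dif_pos h']
  exact h'.choose_spec

lemma arcOp_eq {k : ℕ} {M : Matching k} {p i : ℕ} (h1 : 1 ≤ i) (h2 : i ≤ k)
    (he : M.opener i = p) : arcOp M p = i := by
  obtain ⟨⟨ha1, ha2⟩, ha3⟩ := arcOp_spec ⟨i, ⟨h1, h2⟩, he⟩
  exact M.opener_inj _ i ha1 ha2 h1 h2 (by rw [ha3, he])

lemma arcCl_eq {k : ℕ} {M : Matching k} {p i : ℕ} (h1 : 1 ≤ i) (h2 : i ≤ k)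
    (he : M.closer i = p) : arcCl M p = i := by
  obtain ⟨⟨ha1, ha2⟩, ha3⟩ := arcCl_spec ⟨i, ⟨h1, h2⟩, he⟩
  exact closer_inj M ha1 ha2 h1 h2 (by rw [ha3, he])

open Classical in
/-- Bucket index of a matching of size `m+1`. -/
noncomputable def mind {m : ℕ} (M : Matching (m+1)) : ℕ :=
  if M.opener (m+1) = 2*m+1 then 0
  else if IsOp M (M.opener (m+1) - 1) then arcOp M (M.opener (m+1) - 1)
  else m + arcCl M (M.opener (m+1) - 1)

/-- Complement of `Lcr` inside `[1,k]`. -/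
def notLcr {k : ℕ} (M : Matching k) : Set ℕ :=
  {i | (1 ≤ i ∧ i ≤ k) ∧ IsCl M (M.opener i + 1)}

/-- Arcs whose closer is directly preceded by a closer. -/
def RadjP {k : ℕ} (M : Matching k) : Set ℕ :=
  {c | (1 ≤ c ∧ c ≤ k) ∧ IsCl M (M.closer c - 1)}

/-- Complement of `RadjP` inside `[1,k]`. -/
def notRadjP {k : ℕ} (M : Matching k) : Set ℕ :=
  {c | (1 ≤ c ∧ c ≤ k) ∧ IsOp M (M.closer c - 1)}

lemma Lcr_compl {k : ℕ} {M : Matching k} (hM : M.NoLeftNesting) :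
    Set.Icc 1 k \ M.LcrSet = notLcr M := by
  rw [Lcr_char hM]
  ext i
  simp only [Set.mem_diff, Set.mem_Icc, Set.mem_setOf_eq, notLcr]
  constructor
  · rintro ⟨⟨h1, h2⟩, hn⟩
    refine ⟨⟨h1, h2⟩, ?_⟩
    have hbd := opener_bd M h1 h2
    have h0 := (op_mem M h1 h2).1
    rcases cover' M (p := M.opener i + 1) (by omega) (by omega) with h | h
    · exact absurd ⟨⟨h1, h2⟩, h⟩ hn
    · exact h
  · rintro ⟨⟨h1, h2⟩, hcl⟩
    refine ⟨⟨h1, h2⟩, ?_⟩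
    rintro ⟨-, hop⟩
    exact not_op_and_cl M hop hcl

lemma RadjP_compl {k : ℕ} (M : Matching k) :
    Set.Icc 1 k \ RadjP M = notRadjP M := by
  ext c
  simp only [Set.mem_diff, Set.mem_Icc, Set.mem_setOf_eq, RadjP, notRadjP]
  constructor
  · rintro ⟨⟨h1, h2⟩, hn⟩
    refine ⟨⟨h1, h2⟩, ?_⟩
    have hbd := cl_mem M h1 h2
    have h0 := M.opener_lt_closer c h1 h2
    have h0' := (op_mem M h1 h2).1
    rcases cover' M (p := M.closer c - 1) (by omega) (by omega) with h | h
    · exact h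
    · exact absurd ⟨⟨h1, h2⟩, h⟩ hn
  · rintro ⟨⟨h1, h2⟩, hop⟩
    refine ⟨⟨h1, h2⟩, ?_⟩
    rintro ⟨-, hcl⟩
    exact not_op_and_cl M hop hcl

lemma shRadj_image {k : ℕ} (M : Matching k) :
    (fun y => y + 1) '' shRadj M = RadjP M := by
  ext c
  simp only [Set.mem_image, shRadj, RadjP, Set.mem_setOf_eq]
  constructor
  · rintro ⟨y, ⟨h1, h2, h3⟩, rfl⟩
    exact ⟨⟨by omega, h2⟩, y, ⟨h1, by omega⟩, by omega⟩
  · rintro ⟨⟨h1, h2⟩, j, ⟨hj1, hj2⟩, hje⟩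
    have hlt : M.closer j < M.closer c := by
      have := M.opener_lt_closer c h1 h2
      have := (op_mem M h1 h2).1
      omega
    have hjc : j < c := by
      have hj0 := (cl_mem M hj1 hj2).1
      by_contra hc
      rcases Nat.eq_or_lt_of_le (Nat.le_of_not_lt hc) with h | h
      · rw [h] at hje; omega
      · have := M.closer_mono c j h1 h (by omega); omega
    have hcj : c = j + 1 := by
      apply closer_pred M hj1 hj2 h1 h2
      have := M.opener_lt_closer c h1 h2
      have := (op_mem M h1 h2).1
      omega
    refine ⟨j, ⟨hj1, by omega, ?_⟩, by omega⟩
    rw [← hcj]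
    have := (cl_mem M h1 h2).1
    omega

lemma bij_notLcr {k : ℕ} (M : Matching k) :
    (fun i => arcCl M (M.opener i + 1)) '' notLcr M = notRadjP M ∧
    Set.InjOn (fun i => arcCl M (M.opener i + 1)) (notLcr M) := by
  constructor
  · ext c
    simp only [Set.mem_image, notLcr, notRadjP, Set.mem_setOf_eq]
    constructor
    · rintro ⟨i, ⟨⟨h1, h2⟩, hcl⟩, rfl⟩
      obtain ⟨⟨ha1, ha2⟩, ha3⟩ := arcCl_spec hcl
      refine ⟨⟨ha1, ha2⟩, i, ⟨h1, h2⟩, by omega⟩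
    · rintro ⟨⟨h1, h2⟩, j, ⟨hj1, hj2⟩, hje⟩
      have hge : 2 ≤ M.closer c := by
        have := M.opener_lt_closer c h1 h2
        have := (op_mem M h1 h2).1
        omega
      have hoc : M.opener j + 1 = M.closer c := by omega
      refine ⟨j, ⟨⟨hj1, hj2⟩, ⟨c, ⟨h1, h2⟩, hoc.symm⟩⟩, ?_⟩
      exact arcCl_eq h1 h2 hoc.symm
  · rintro i1 ⟨⟨h11, h12⟩, hcl1⟩ i2 ⟨⟨h21, h22⟩, hcl2⟩ he
    simp only at he
    obtain ⟨-, ha1⟩ := arcCl_spec hcl1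
    obtain ⟨-, ha2⟩ := arcCl_spec hcl2
    rw [he, ha2] at ha1
    exact M.opener_inj i1 i2 h11 h12 h21 h22 (by omega)

lemma card_shRadj_eq_Lcr {k : ℕ} {M : Matching k} (hM : M.NoLeftNesting) :
    (shRadj M).ncard = M.LcrSet.ncard := by
  have hIcc : (Set.Icc 1 k).Finite := Set.finite_Icc 1 k
  have hLsub := Lcr_sub M
  have hRsub : RadjP M ⊆ Set.Icc 1 k := by
    rintro c ⟨⟨h1, h2⟩, -⟩
    exact Set.mem_Icc.mpr ⟨h1, h2⟩
  have h1 : (shRadj M).ncard = (RadjP M).ncard := by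
    rw [← shRadj_image M]
    exact (Set.ncard_image_of_injOn (fun a _ b _ h => by omega)).symm
  obtain ⟨himg, hinj⟩ := bij_notLcr M
  have h2 : (notLcr M).ncard = (notRadjP M).ncard := by
    rw [← himg]
    exact (Set.ncard_image_of_injOn hinj).symm
  have h3 : (Set.Icc 1 k \ M.LcrSet).ncard = (Set.Icc 1 k).ncard - M.LcrSet.ncard :=
    Set.ncard_diff hLsub (hIcc.subset hLsub)
  have h4 : (Set.Icc 1 k \ RadjP M).ncard = (Set.Icc 1 k).ncard - (RadjP M).ncard :=
    Set.ncard_diff hRsub (hIcc.subset hRsub)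
  have h5 := Set.ncard_le_ncard hLsub hIcc
  have h6 := Set.ncard_le_ncard hRsub hIcc
  rw [Lcr_compl hM] at h3
  rw [RadjP_compl M] at h4
  rw [h1]
  omega

lemma pointwise_card {k : ℕ} {A B : Set ℕ} {M : Matching k} (hM : M ∈ MatClass k A B) :
    {y | y ∈ shRadj M ∧ y ∉ B}.ncard = A.ncard := by
  obtain ⟨hN, hA, hB⟩ := hM
  have hIcc : (Set.Icc 1 k).Finite := Set.finite_Icc 1 k
  have hBfin : B.Finite := by
    rw [← hB]
    exact hIcc.subset ((shB_sub_Icc M).trans (Set.Icc_subset_Icc_right (by omega)))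
  have hsub1 : B ⊆ shRadj M := hB ▸ shB_sub_shRadj M
  have hsub2 : B ⊆ M.LcrSet := hB ▸ shB_sub_Lcr hN
  have he : {y | y ∈ shRadj M ∧ y ∉ B} = shRadj M \ B := rfl
  rw [he, Set.ncard_diff hsub1 hBfin, card_shRadj_eq_Lcr hN, ← hA, hB,
    Set.ncard_diff hsub2 hBfin]

end MatSide4

section MatSide5

lemma insM_congr {m : ℕ} {M1 M2 : Matching m} {o1 o2 : ℕ} {p1 : 1 ≤ o1} {q1 : o1 ≤ 2*m+1}
    {p2 : 1 ≤ o2} {q2 : o2 ≤ 2*m+1} (h : M1 = M2) (ho : o1 = o2) :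
    insM M1 o1 p1 q1 = insM M2 o2 p2 q2 := by
  subst h; subst ho; rfl

lemma shU_eq_lt {o a p : ℕ} (hp : p < o) : shU o a = p ↔ a = p := by
  unfold shU; split_ifs <;> omega

lemma stats_ins_zero {m : ℕ} (hm : 1 ≤ m) {M' : Matching m} (hM' : M'.NoLeftNesting)
    (ho1 : (1:ℕ) ≤ 2*m+1) (ho2 : 2*m+1 ≤ 2*m+1) :
    (insM M' (2*m+1) ho1 ho2).NoLeftNesting ∧ delM (insM M' (2*m+1) ho1 ho2) = M' ∧
    mind (insM M' (2*m+1) ho1 ho2) = 0 ∧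
    (insM M' (2*m+1) ho1 ho2).LcrSet = M'.LcrSet ∧
    shB (insM M' (2*m+1) ho1 ho2) = shB M' := by
  have hval : InsValid M' (2*m+1) := Or.inl rfl
  have hN := insM_NLN (ho1 := ho1) (ho2 := ho2) hM' hval
  refine ⟨hN, delM_insM _ _ _ _, ?_, ?_, ?_⟩
  · unfold mind
    rw [insM_opener_top, if_pos rfl]
  · rw [Lcr_insM hM' hval]
    have h0 : {i | (1 ≤ i ∧ i ≤ m) ∧ M'.opener i + 1 = 2*m+1} = ∅ := by
      ext i
      simp only [Set.mem_setOf_eq, Set.mem_empty_iff_false, iff_false]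
      rintro ⟨⟨h1, h2⟩, he⟩
      have := opener_bd M' h1 h2
      omega
    rw [h0, Set.union_empty]
  · rw [shB_insM hm hM' hval]
    have h1 : {y | y ∈ shB M' ∧ M'.closer y + 1 ≠ 2*m+1} = shB M' := by
      ext y
      simp only [Set.mem_setOf_eq]
      refine ⟨fun h => h.1, fun h => ⟨h, fun he => ?_⟩⟩
      have hb := Set.mem_Icc.mp (shB_sub_Icc M' h)
      have : y = m := closer_inj M' hb.1 (by omega) (by omega) (le_refl m)
        (by rw [closer_top M' hm]; omega)
      omega
    have h2 : (if M'.opener m + 1 = 2*m+1 then ({m} : Set ℕ) else ∅) = ∅ := by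
      have := opener_bd M' (show 1 ≤ m by omega) (le_refl m)
      rw [if_neg (by omega)]
    rw [h1, h2, Set.union_empty]

open Classical in
lemma stats_ins_op {m : ℕ} (hm : 1 ≤ m) {M' : Matching m} (hM' : M'.NoLeftNesting)
    {x o : ℕ} (hx1 : 1 ≤ x) (hx2 : x ≤ m) (hxL : x ∉ M'.LcrSet)
    (hoe : M'.opener x + 1 = o) (ho1 : 1 ≤ o) (ho2 : o ≤ 2*m+1) :
    (insM M' o ho1 ho2).NoLeftNesting ∧ delM (insM M' o ho1 ho2) = M' ∧
    mind (insM M' o ho1 ho2) = x ∧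
    (insM M' o ho1 ho2).LcrSet = M'.LcrSet ∪ {x} ∧
    shB (insM M' o ho1 ho2) = shB M' ∪ (if x = m then {m} else ∅) := by
  have hob := opener_bd M' hx1 hx2
  have hopx := (op_mem M' hx1 hx2).1
  have hon : ¬ IsOp M' o := by
    intro hop
    apply hxL
    rw [Lcr_char hM']
    exact ⟨⟨hx1, hx2⟩, by rw [hoe]; exact hop⟩
  have hocl : IsCl M' o := by
    rcases cover' M' (p := o) ho1 (by omega) with h | h
    · exact absurd h hon
    · exact h
  have hval : InsValid M' o := Or.inr hocl
  have hN := insM_NLN (ho1 := ho1) (ho2 := ho2) hM' hval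
  refine ⟨hN, delM_insM _ _ _ _, ?_, ?_, ?_⟩
  · unfold mind
    rw [insM_opener_top]
    rw [if_neg (by omega)]
    have hov : (insM M' o ho1 ho2).opener x = o - 1 := by
      rw [insM_opener_mid hx1 hx2, (shU_eq_lt (by omega))]
      omega
    rw [if_pos ⟨x, ⟨hx1, by omega⟩, hov⟩]
    exact arcOp_eq hx1 (by omega) hov
  · rw [Lcr_insM hM' hval]
    congr 1
    ext i
    simp only [Set.mem_setOf_eq, Set.mem_singleton_iff]
    constructor
    · rintro ⟨⟨h1, h2⟩, he⟩
      exact M'.opener_inj i x h1 h2 hx1 hx2 (by omega)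
    · rintro rfl
      exact ⟨⟨hx1, hx2⟩, hoe⟩
  · rw [shB_insM hm hM' hval]
    have h1 : {y | y ∈ shB M' ∧ M'.closer y + 1 ≠ o} = shB M' := by
      ext y
      simp only [Set.mem_setOf_eq]
      refine ⟨fun h => h.1, fun h => ⟨h, fun he => ?_⟩⟩
      have hb := Set.mem_Icc.mp (shB_sub_Icc M' h)
      exact M'.opener_ne_closer x y hx1 hx2 hb.1 (by omega) (by omega)
    have h2 : (if M'.opener m + 1 = o then ({m} : Set ℕ) else ∅) =
        (if x = m then ({m} : Set ℕ) else ∅) := by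
      by_cases hxm : x = m
      · rw [if_pos (show M'.opener m + 1 = o from hxm ▸ hoe), if_pos hxm]
      · have : ¬ (M'.opener m + 1 = o) := by
          intro he
          exact hxm (M'.opener_inj x m hx1 hx2 (by omega) (le_refl m) (by omega))
        rw [if_neg this, if_neg hxm]
    rw [h1, h2]

open Classical in
lemma stats_ins_cl {m : ℕ} (hm : 1 ≤ m) {M' : Matching m} (hM' : M'.NoLeftNesting)
    {y o : ℕ} (hy1 : 1 ≤ y) (hy2 : y + 1 ≤ m) (hyR : M'.closer (y+1) = M'.closer y + 1)
    (hoe : M'.closer y + 1 = o) (ho1 : 1 ≤ o) (ho2 : o ≤ 2*m+1) :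
    (insM M' o ho1 ho2).NoLeftNesting ∧ delM (insM M' o ho1 ho2) = M' ∧
    mind (insM M' o ho1 ho2) = m + y ∧
    (insM M' o ho1 ho2).LcrSet = M'.LcrSet ∧
    shB (insM M' o ho1 ho2) = shB M' \ {y} := by
  have hcb := closer_bd M' hy1 (by omega) (by omega)
  have hcy := (cl_mem M' hy1 (by omega)).1
  have hcy2 : 2 ≤ M'.closer y := by
    have := M'.opener_lt_closer y hy1 (by omega)
    have := (op_mem M' hy1 (by omega)).1
    omega
  have hval : InsValid M' o := Or.inr ⟨y+1, ⟨by omega, hy2⟩, by rw [hyR, hoe]⟩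
  have hN := insM_NLN (ho1 := ho1) (ho2 := ho2) hM' hval
  refine ⟨hN, delM_insM _ _ _ _, ?_, ?_, ?_⟩
  · unfold mind
    rw [insM_opener_top]
    rw [if_neg (by omega)]
    have hnop : ¬ IsOp (insM M' o ho1 ho2) (o - 1) := by
      rintro ⟨j, ⟨hj1, hj2⟩, hje⟩
      by_cases hjm : j ≤ m
      · rw [insM_opener_mid hj1 hjm, (shU_eq_lt (by omega))] at hje
        exact M'.opener_ne_closer j y hj1 hjm hy1 (by omega) (by omega)
      · rw [(show j = m+1 by omega), insM_opener_top] at hje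
        omega
    rw [if_neg hnop]
    have hov : (insM M' o ho1 ho2).closer y = o - 1 := by
      rw [insM_closer_mid hy1 (by omega), (shU_eq_lt (by omega))]
      omega
    rw [arcCl_eq hy1 (by omega) hov]
  · rw [Lcr_insM hM' hval]
    have h0 : {i | (1 ≤ i ∧ i ≤ m) ∧ M'.opener i + 1 = o} = ∅ := by
      ext i
      simp only [Set.mem_setOf_eq, Set.mem_empty_iff_false, iff_false]
      rintro ⟨⟨h1, h2⟩, he⟩
      exact M'.opener_ne_closer i y h1 h2 hy1 (by omega) (by omega)
    rw [h0, Set.union_empty]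
  · rw [shB_insM hm hM' hval]
    have h1 : {y' | y' ∈ shB M' ∧ M'.closer y' + 1 ≠ o} = shB M' \ {y} := by
      ext y'
      simp only [Set.mem_setOf_eq, Set.mem_diff, Set.mem_singleton_iff]
      constructor
      · rintro ⟨h, hne⟩
        exact ⟨h, fun he => hne (by rw [he]; exact hoe)⟩
      · rintro ⟨h, hne⟩
        refine ⟨h, fun he => ?_⟩
        have hb := Set.mem_Icc.mp (shB_sub_Icc M' h)
        exact hne (closer_inj M' hb.1 (by omega) hy1 (by omega) (by omega))
    have h2 : (if M'.opener m + 1 = o then ({m} : Set ℕ) else ∅) = ∅ := by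
      have : ¬ (M'.opener m + 1 = o) := by
        intro he
        exact M'.opener_ne_closer m y (by omega) (le_refl m) hy1 (by omega) (by omega)
      rw [if_neg this]
    rw [h1, h2, Set.union_empty]

end MatSide5

section MatSide6

open Classical in
lemma key_zero {m : ℕ} (hm : 1 ≤ m) {M : Matching (m+1)} (hM : M.NoLeftNesting)
    (hmind : mind M = 0) :
    (delM M).NoLeftNesting ∧
    ∃ (ho1 : (1:ℕ) ≤ 2*m+1) (ho2 : 2*m+1 ≤ 2*m+1), M = insM (delM M) (2*m+1) ho1 ho2 := by
  obtain ⟨o, ho1, ho2, hotop, hoge2, hN', hval, hins⟩ := mat_master hm hM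
  have ho : o = 2*m+1 := by
    by_contra hne
    unfold mind at hmind
    rw [hotop, if_neg hne] at hmind
    by_cases hop : IsOp M (o - 1)
    · rw [if_pos hop] at hmind
      have := (arcOp_spec hop).1.1
      omega
    · rw [if_neg hop] at hmind
      omega
  refine ⟨hN', by omega, le_refl _, ?_⟩
  conv_lhs => rw [hins]
  exact insM_congr rfl ho

open Classical in
lemma key_op {m : ℕ} (hm : 1 ≤ m) {M : Matching (m+1)} (hM : M.NoLeftNesting) {x : ℕ}
    (hx1 : 1 ≤ x) (hx2 : x ≤ m) (hmind : mind M = x) :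
    (delM M).NoLeftNesting ∧ x ∉ (delM M).LcrSet ∧ (delM M).opener x + 1 ≤ 2*m+1 ∧
    ∃ (ho1 : 1 ≤ (delM M).opener x + 1) (ho2 : (delM M).opener x + 1 ≤ 2*m+1),
      M = insM (delM M) ((delM M).opener x + 1) ho1 ho2 := by
  obtain ⟨o, ho1, ho2, hotop, hoge2, hN', hval, hins⟩ := mat_master hm hM
  unfold mind at hmind
  rw [hotop] at hmind
  have hone : o ≠ 2*m+1 := by
    intro he
    rw [if_pos he] at hmind
    omega
  rw [if_neg hone] at hmind
  have hop : IsOp M (o - 1) := by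
    by_contra hop
    rw [if_neg hop] at hmind
    have hocl : IsCl M (o-1) := by
      rcases cover' M (p := o-1) (by omega) (by omega) with h | h
      · exact absurd h hop
      · exact h
    have := (arcCl_spec hocl).1.1
    omega
  rw [if_pos hop] at hmind
  have hov : M.opener x = o - 1 := by
    have h := (arcOp_spec hop).2
    rw [hmind] at h
    exact h
  have hov' : (delM M).opener x = o - 1 := by
    show delOp M x = o - 1
    rw [delOp_mid hx1 hx2, hotop, hov]
    unfold shD
    rw [if_pos (by omega)]
  have hoo : (delM M).opener x + 1 = o := by omega
  have hxL : x ∉ (delM M).LcrSet := by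
    rw [Lcr_char hN']
    rintro ⟨-, hopx⟩
    rw [hoo] at hopx
    rcases hval with h | h
    · exact hone h
    · exact not_op_and_cl (delM M) hopx h
  refine ⟨hN', hxL, by omega, by omega, by omega, ?_⟩
  conv_lhs => rw [hins]
  exact insM_congr rfl hoo.symm

open Classical in
lemma key_cl {m : ℕ} (hm : 1 ≤ m) {M : Matching (m+1)} (hM : M.NoLeftNesting) {y : ℕ}
    (hy1 : 1 ≤ y) (hy2 : y ≤ m) (hmind : mind M = m + y) :
    (delM M).NoLeftNesting ∧ y + 1 ≤ m ∧
    (delM M).closer (y+1) = (delM M).closer y + 1 ∧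
    ∃ (ho1 : 1 ≤ (delM M).closer y + 1) (ho2 : (delM M).closer y + 1 ≤ 2*m+1),
      M = insM (delM M) ((delM M).closer y + 1) ho1 ho2 := by
  obtain ⟨o, ho1, ho2, hotop, hoge2, hN', hval, hins⟩ := mat_master hm hM
  unfold mind at hmind
  rw [hotop] at hmind
  have hone : o ≠ 2*m+1 := by
    intro he
    rw [if_pos he] at hmind
    omega
  rw [if_neg hone] at hmind
  have hnop : ¬ IsOp M (o - 1) := by
    intro hop
    rw [if_pos hop] at hmind
    obtain ⟨⟨ha1, ha2⟩, ha3⟩ := arcOp_spec hop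
    have hne : arcOp M (o-1) ≠ m + 1 := by
      intro he
      rw [he, hotop] at ha3
      omega
    omega
  rw [if_neg hnop] at hmind
  have hocl : IsCl M (o-1) := by
    rcases cover' M (p := o-1) (by omega) (by omega) with h | h
    · exact absurd h hnop
    · exact h
  obtain ⟨⟨ha1, ha2⟩, ha3⟩ := arcCl_spec hocl
  have hay : arcCl M (o-1) = y := by omega
  rw [hay] at ha3
  -- y ≤ m
  have hym : y ≤ m := by
    by_contra hc
    have : y = m + 1 := by omega
    rw [this, closer_top M (by omega)] at ha3
    omega
  -- c with (delM M).closer c = o gives M.closer c = o + 1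
  obtain ⟨c, ⟨hc1, hc2⟩, hce⟩ : ∃ c, (1 ≤ c ∧ c ≤ m) ∧ (delM M).closer c = o := by
    rcases hval with h | h
    · exact absurd h hone
    · exact h
  have hceM : M.closer c = o + 1 := by
    have h0 : delCl M c = o := hce
    rw [delCl_mid hc1 hc2, hotop] at h0
    have := del_cl_ne M hc1 hc2
    rw [hotop] at this
    unfold shD at h0
    split_ifs at h0 <;> omega
  have hyc : y < c := by
    by_contra hc'
    rcases Nat.eq_or_lt_of_le (Nat.le_of_not_lt hc') with h | h
    · rw [h] at hceM
      omega
    · have := M.closer_mono c y hc1 h (by omega)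
      omega
  have hy2' : y + 1 ≤ m := by omega
  have hcy' : (delM M).closer y = o - 1 := by
    show delCl M y = o - 1
    rw [delCl_mid hy1 hym, hotop, ha3]
    unfold shD
    rw [if_pos (by omega)]
  have hcc' : (delM M).closer c = (delM M).closer y + 1 := by omega
  have hcy1 : c = y + 1 := closer_pred (delM M) hy1 hym hc1 hc2 hcc'
  refine ⟨hN', hy2', by rw [← hcy1]; omega, by omega, by omega, ?_⟩
  conv_lhs => rw [hins]
  exact insM_congr rfl (by omega)

end MatSide6

section MatSide7

lemma mbucket_zero {m : ℕ} (hm : 1 ≤ m) (A B : Set ℕ) :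
    {M | M ∈ MatClass (m+1) A B ∧ mind M = 0}.ncard = (MatClass m A B).ncard := by
  have himg : (fun M : Matching (m+1) => delM M) ''
      {M | M ∈ MatClass (m+1) A B ∧ mind M = 0} = MatClass m A B := by
    ext M'
    constructor
    · rintro ⟨M, ⟨⟨hN, hA, hB⟩, hmind⟩, rfl⟩
      obtain ⟨hN', ho1, ho2, hins⟩ := key_zero hm hN hmind
      obtain ⟨-, -, -, hL, hS⟩ := stats_ins_zero hm hN' ho1 ho2
      have e1 : M.LcrSet = (delM M).LcrSet := by
        conv_lhs => rw [hins]
        rw [hL]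
      have e2 : shB M = shB (delM M) := by
        conv_lhs => rw [hins]
        rw [hS]
      exact ⟨hN', by rw [← hA, e1, e2], by rw [← hB, e2]⟩
    · rintro ⟨hN', hA', hB'⟩
      have p1 : (1:ℕ) ≤ 2*m+1 := by omega
      have p2 : 2*m+1 ≤ 2*m+1 := le_refl _
      obtain ⟨hN, hdel, hmind, hL, hS⟩ := stats_ins_zero hm hN' p1 p2
      refine ⟨insM M' (2*m+1) p1 p2, ⟨⟨hN, ?_, ?_⟩, hmind⟩, hdel⟩
      · rw [hL, hS]; exact hA'
      · rw [hS]; exact hB'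
  have hinj : Set.InjOn (fun M : Matching (m+1) => delM M)
      {M | M ∈ MatClass (m+1) A B ∧ mind M = 0} := by
    rintro M1 ⟨⟨hN1, -, -⟩, hm1⟩ M2 ⟨⟨hN2, -, -⟩, hm2⟩ he
    obtain ⟨-, p1, p2, hins1⟩ := key_zero hm hN1 hm1
    obtain ⟨-, q1, q2, hins2⟩ := key_zero hm hN2 hm2
    simp only at he
    rw [hins1, hins2]
    exact insM_congr he rfl
  rw [← Set.ncard_image_of_injOn hinj, himg]

open Classical in
lemma mbucket_op {m : ℕ} (hm : 1 ≤ m) (A B : Set ℕ) (hAB : Disjoint A B) {x : ℕ}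
    (hx1 : 1 ≤ x) (hx2 : x + 1 ≤ m) :
    {M | M ∈ MatClass (m+1) A B ∧ mind M = x}.ncard =
      if x ∈ A then (MatClass m (A \ {x}) B).ncard else 0 := by
  have key : ∀ M ∈ {M | M ∈ MatClass (m+1) A B ∧ mind M = x},
      x ∈ A ∧ delM M ∈ MatClass m (A \ {x}) B ∧
      ∃ (ho1 : 1 ≤ (delM M).opener x + 1) (ho2 : (delM M).opener x + 1 ≤ 2*m+1),
        M = insM (delM M) ((delM M).opener x + 1) ho1 ho2 := by
    rintro M ⟨⟨hN, hA, hB⟩, hmind⟩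
    obtain ⟨hN', hxL, hob, ho1, ho2, hins⟩ := key_op hm hN hx1 (by omega) hmind
    obtain ⟨-, -, -, hL, hS⟩ := stats_ins_op hm hN' hx1 (by omega) hxL rfl ho1 ho2
    have e1 : M.LcrSet = (delM M).LcrSet ∪ {x} := by
      conv_lhs => rw [hins]
      rw [hL]
    have e2 : shB M = shB (delM M) := by
      conv_lhs => rw [hins]
      rw [hS, if_neg (by omega), Set.union_empty]
    have hxB : x ∉ shB (delM M) := fun h => hxL (shB_sub_Lcr hN' h)
    have hxA : x ∈ A := by
      rw [← hA, e1, e2]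
      exact ⟨Or.inr rfl, hxB⟩
    refine ⟨hxA, ⟨hN', ?_, ?_⟩, ho1, ho2, hins⟩
    · rw [← hA, e1, e2]
      ext v
      simp only [Set.mem_diff, Set.mem_union, Set.mem_singleton_iff]
      constructor
      · rintro ⟨hv, hnb⟩
        refine ⟨⟨Or.inl hv, hnb⟩, fun he => ?_⟩
        rw [he] at hv
        exact hxL hv
      · rintro ⟨⟨hv | hv, hnb⟩, hne⟩
        · exact ⟨hv, hnb⟩
        · exact absurd hv hne
    · rw [← hB, e2]
  by_cases hxA : x ∈ A
  · rw [if_pos hxA]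
    have hxB : x ∉ B := Set.disjoint_left.mp hAB hxA
    have himg : (fun M : Matching (m+1) => delM M) ''
        {M | M ∈ MatClass (m+1) A B ∧ mind M = x} = MatClass m (A \ {x}) B := by
      ext M'
      constructor
      · rintro ⟨M, hM, rfl⟩
        exact (key M hM).2.1
      · rintro ⟨hN', hA', hB'⟩
        have hxL : x ∉ M'.LcrSet := by
          intro h
          by_cases hs : x ∈ shB M'
          · rw [hB'] at hs
            exact hxB hs
          · have hx : x ∈ A \ {x} := by
              rw [← hA']
              exact ⟨h, hs⟩
            simp at hx
        have p1 : 1 ≤ M'.opener x + 1 := by omega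
        have p2 : M'.opener x + 1 ≤ 2*m+1 := by
          have := opener_bd M' hx1 (by omega)
          omega
        obtain ⟨hN, hdel, hmind, hL, hS⟩ := stats_ins_op hm hN' hx1 (by omega) hxL rfl p1 p2
        refine ⟨insM M' (M'.opener x + 1) p1 p2, ⟨⟨hN, ?_, ?_⟩, hmind⟩, hdel⟩
        · rw [hL, hS, if_neg (by omega), Set.union_empty, hB']
          ext v
          simp only [Set.mem_diff, Set.mem_union, Set.mem_singleton_iff]
          constructor
          · rintro ⟨hv | hv, hnb⟩
            · by_cases hs : v ∈ shB M'
              · rw [hB'] at hs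
                exact absurd hs hnb
              · have hv2 : v ∈ A \ {x} := by rw [← hA']; exact ⟨hv, hs⟩
                exact hv2.1
            · rw [hv]; exact hxA
          · intro hv
            by_cases hve : v = x
            · exact ⟨Or.inr hve, by rw [hve]; exact hxB⟩
            · have hv2 : v ∈ A \ {x} := ⟨hv, hve⟩
              rw [← hA'] at hv2
              exact ⟨Or.inl hv2.1, fun hb => hv2.2 (hB'.symm ▸ hb)⟩
        · rw [hS, if_neg (by omega), Set.union_empty, hB']
    have hinj : Set.InjOn (fun M : Matching (m+1) => delM M)
        {M | M ∈ MatClass (m+1) A B ∧ mind M = x} := by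
      rintro M1 h1 M2 h2 he
      obtain ⟨-, -, p1, p2, hins1⟩ := key M1 h1
      obtain ⟨-, -, q1, q2, hins2⟩ := key M2 h2
      simp only at he
      rw [hins1, hins2]
      exact insM_congr he (by rw [he])
    rw [← Set.ncard_image_of_injOn hinj, himg]
  · rw [if_neg hxA]
    have hem : {M | M ∈ MatClass (m+1) A B ∧ mind M = x} = ∅ := by
      ext M
      simp only [Set.mem_setOf_eq, Set.mem_empty_iff_false, iff_false]
      intro hM
      exact hxA (key M hM).1
    rw [hem, Set.ncard_empty]

open Classical in
lemma mbucket_op_top {m : ℕ} (hm : 1 ≤ m) (A B : Set ℕ) :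
    {M | M ∈ MatClass (m+1) A B ∧ mind M = m}.ncard =
      if m ∈ B then (MatClass m A (B \ {m})).ncard else 0 := by
  have key : ∀ M ∈ {M | M ∈ MatClass (m+1) A B ∧ mind M = m},
      m ∈ B ∧ delM M ∈ MatClass m A (B \ {m}) ∧
      ∃ (ho1 : 1 ≤ (delM M).opener m + 1) (ho2 : (delM M).opener m + 1 ≤ 2*m+1),
        M = insM (delM M) ((delM M).opener m + 1) ho1 ho2 := by
    rintro M ⟨⟨hN, hA, hB⟩, hmind⟩
    obtain ⟨hN', hxL, hob, ho1, ho2, hins⟩ := key_op hm hN hm (le_refl m) hmind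
    obtain ⟨-, -, -, hL, hS⟩ := stats_ins_op hm hN' hm (le_refl m) hxL rfl ho1 ho2
    have e1 : M.LcrSet = (delM M).LcrSet ∪ {m} := by
      conv_lhs => rw [hins]
      rw [hL]
    have e2 : shB M = shB (delM M) ∪ {m} := by
      conv_lhs => rw [hins]
      rw [hS, if_pos rfl]
    have hmS : m ∉ shB (delM M) := by
      intro h
      have := Set.mem_Icc.mp (shB_sub_Icc (delM M) h)
      omega
    have hmB : m ∈ B := by rw [← hB, e2]; exact Or.inr rfl
    refine ⟨hmB, ⟨hN', ?_, ?_⟩, ho1, ho2, hins⟩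
    · rw [← hA, e1, e2]
      ext v
      simp only [Set.mem_diff, Set.mem_union, Set.mem_singleton_iff, not_or]
      constructor
      · rintro ⟨hv, hnb⟩
        exact ⟨Or.inl hv, hnb, fun he => hxL (he ▸ hv)⟩
      · rintro ⟨hv | hv, hnb, hne⟩
        · exact ⟨hv, hnb⟩
        · exact absurd hv hne
    · rw [← hB, e2]
      ext v
      simp only [Set.mem_diff, Set.mem_union, Set.mem_singleton_iff]
      constructor
      · intro hv
        exact ⟨Or.inl hv, fun he => hmS (he ▸ hv)⟩
      · rintro ⟨hv | hv, hne⟩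
        · exact hv
        · exact absurd hv hne
  by_cases hmB : m ∈ B
  · rw [if_pos hmB]
    have himg : (fun M : Matching (m+1) => delM M) ''
        {M | M ∈ MatClass (m+1) A B ∧ mind M = m} = MatClass m A (B \ {m}) := by
      ext M'
      constructor
      · rintro ⟨M, hM, rfl⟩
        exact (key M hM).2.1
      · rintro ⟨hN', hA', hB'⟩
        have hxL : m ∉ M'.LcrSet := top_not_Lcr hN' hm
        have p1 : 1 ≤ M'.opener m + 1 := by omega
        have p2 : M'.opener m + 1 ≤ 2*m+1 := by
          have := opener_bd M' (show 1 ≤ m by omega) (le_refl m)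
          omega
        obtain ⟨hN, hdel, hmind, hL, hS⟩ :=
          stats_ins_op hm hN' (show 1 ≤ m by omega) (le_refl m) hxL rfl p1 p2
        refine ⟨insM M' (M'.opener m + 1) p1 p2, ⟨⟨hN, ?_, ?_⟩, hmind⟩, hdel⟩
        · rw [hL, hS, if_pos rfl, hB']
          ext v
          simp only [Set.mem_diff, Set.mem_union, Set.mem_singleton_iff, not_or]
          constructor
          · rintro ⟨hv | hv, hnb, hne⟩
            · have hvb : v ∉ B := fun hb => hnb ⟨hb, hne⟩
              rw [← hA']
              refine ⟨hv, fun hs => hvb ?_⟩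
              rw [hB'] at hs
              exact hs.1
            · exact absurd hv hne
          · intro hv
            have hv2 : v ∈ M'.LcrSet \ shB M' := by rw [hA']; exact hv
            have hvm : v ≠ m := fun he => hxL (he ▸ hv2.1)
            exact ⟨Or.inl hv2.1, fun hb => hv2.2 (by rw [hB']; exact hb), hvm⟩
        · rw [hS, if_pos rfl, hB']
          ext v
          simp only [Set.mem_union, Set.mem_diff, Set.mem_singleton_iff]
          constructor
          · rintro (⟨hv, -⟩ | hv)
            · exact hv
            · exact hv ▸ hmB
          · intro hv
            by_cases hve : v = m
            · exact Or.inr hve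
            · exact Or.inl ⟨hv, hve⟩
    have hinj : Set.InjOn (fun M : Matching (m+1) => delM M)
        {M | M ∈ MatClass (m+1) A B ∧ mind M = m} := by
      rintro M1 h1 M2 h2 he
      obtain ⟨-, -, p1, p2, hins1⟩ := key M1 h1
      obtain ⟨-, -, q1, q2, hins2⟩ := key M2 h2
      simp only at he
      rw [hins1, hins2]
      exact insM_congr he (by rw [he])
    rw [← Set.ncard_image_of_injOn hinj, himg]
  · rw [if_neg hmB]
    have hem : {M | M ∈ MatClass (m+1) A B ∧ mind M = m} = ∅ := by
      ext M
      simp only [Set.mem_setOf_eq, Set.mem_empty_iff_false, iff_false]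
      intro hM
      exact hmB (key M hM).1
    rw [hem, Set.ncard_empty]

end MatSide7

section MatSide8

open Classical in
lemma mbucket_cl {m : ℕ} (hm : 1 ≤ m) (A B : Set ℕ) (hAB : Disjoint A B) {y : ℕ}
    (hy1 : 1 ≤ y) (hy2 : y + 1 ≤ m) :
    {M | M ∈ MatClass (m+1) A B ∧ mind M = m + y}.ncard =
      (if y ∈ A then (MatClass m (A \ {y}) (B ∪ {y})).ncard else 0) +
      {M' | M' ∈ MatClass m A B ∧ y ∈ shRadj M' ∧ y ∉ B}.ncard := by
  have key : ∀ M ∈ {M | M ∈ MatClass (m+1) A B ∧ mind M = m + y},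
      ((y ∈ A ∧ delM M ∈ MatClass m (A \ {y}) (B ∪ {y})) ∨
        (delM M ∈ MatClass m A B ∧ y ∈ shRadj (delM M) ∧ y ∉ B)) ∧
      ∃ (ho1 : 1 ≤ (delM M).closer y + 1) (ho2 : (delM M).closer y + 1 ≤ 2*m+1),
        M = insM (delM M) ((delM M).closer y + 1) ho1 ho2 := by
    rintro M ⟨⟨hN, hA, hB⟩, hmind⟩
    obtain ⟨hN', hy2', hyR, ho1, ho2, hins⟩ := key_cl hm hN hy1 (by omega) hmind
    obtain ⟨-, -, -, hL, hS⟩ := stats_ins_cl hm hN' hy1 hy2' hyR rfl ho1 ho2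
    have e1 : M.LcrSet = (delM M).LcrSet := by
      conv_lhs => rw [hins]
      rw [hL]
    have e2 : shB M = shB (delM M) \ {y} := by
      conv_lhs => rw [hins]
      rw [hS]
    refine ⟨?_, ho1, ho2, hins⟩
    by_cases hys : y ∈ shB (delM M)
    · left
      have hyL : y ∈ (delM M).LcrSet := shB_sub_Lcr hN' hys
      have hyA : y ∈ A := by
        rw [← hA, e1, e2]
        exact ⟨hyL, fun h => h.2 rfl⟩
      refine ⟨hyA, hN', ?_, ?_⟩
      · rw [← hA, e1, e2]
        ext v
        simp only [Set.mem_diff, Set.mem_singleton_iff]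
        constructor
        · rintro ⟨hv, hnb⟩
          exact ⟨⟨hv, fun h => hnb h.1⟩, fun he => hnb (he ▸ hys)⟩
        · rintro ⟨⟨hv, hnb⟩, hne⟩
          exact ⟨hv, fun h => hnb ⟨h, hne⟩⟩
      · rw [← hB, e2]
        ext v
        simp only [Set.mem_union, Set.mem_diff, Set.mem_singleton_iff]
        constructor
        · intro hv
          by_cases hve : v = y
          · exact Or.inr hve
          · exact Or.inl ⟨hv, hve⟩
        · rintro (⟨hv, -⟩ | hv)
          · exact hv
          · exact hv ▸ hys
    · right
      have hyB : y ∉ B := by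
        rw [← hB, e2]
        exact fun h => hys h.1
      refine ⟨⟨hN', ?_, ?_⟩, ⟨hy1, hy2', hyR⟩, hyB⟩
      · rw [← hA, e1, e2]
        ext v
        simp only [Set.mem_diff, Set.mem_singleton_iff]
        constructor
        · rintro ⟨hv, hnb⟩
          exact ⟨hv, fun h => hnb h.1⟩
        · rintro ⟨hv, hnb⟩
          exact ⟨hv, fun h => hnb ⟨h, fun he => hys (he ▸ h)⟩⟩
      · rw [← hB, e2]
        ext v
        simp only [Set.mem_diff, Set.mem_singleton_iff]
        exact ⟨fun hv => ⟨hv, fun he => hys (he ▸ hv)⟩, fun h => h.1⟩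
  have hinj : Set.InjOn (fun M : Matching (m+1) => delM M)
      {M | M ∈ MatClass (m+1) A B ∧ mind M = m + y} := by
    rintro M1 h1 M2 h2 he
    obtain ⟨p1, p2, hins1⟩ := (key M1 h1).2
    obtain ⟨q1, q2, hins2⟩ := (key M2 h2).2
    simp only at he
    rw [hins1, hins2]
    exact insM_congr he (by rw [he])
  have hfin2 : {M' | M' ∈ MatClass m A B ∧ y ∈ shRadj M' ∧ y ∉ B}.Finite :=
    (MatClass_finite m A B).subset (fun M' h => h.1)
  -- backward construction, case 2
  have hback2 : ∀ M' ∈ {M' | M' ∈ MatClass m A B ∧ y ∈ shRadj M' ∧ y ∉ B},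
      M' ∈ (fun M : Matching (m+1) => delM M) ''
        {M | M ∈ MatClass (m+1) A B ∧ mind M = m + y} := by
    rintro M' ⟨⟨hN', hA', hB'⟩, ⟨-, -, hyR⟩, hyB⟩
    have p1 : 1 ≤ M'.closer y + 1 := by omega
    have p2 : M'.closer y + 1 ≤ 2*m+1 := by
      have := (cl_mem M' hy1 (by omega)).2
      omega
    obtain ⟨hN, hdel, hmind, hL, hS⟩ := stats_ins_cl hm hN' hy1 hy2 hyR rfl p1 p2
    have hBy : shB M' \ {y} = shB M' := by
      ext v
      simp only [Set.mem_diff, Set.mem_singleton_iff]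
      exact ⟨fun h => h.1, fun h => ⟨h, fun he => hyB (by rw [← he, ← hB']; exact h)⟩⟩
    refine ⟨insM M' (M'.closer y + 1) p1 p2, ⟨⟨hN, ?_, ?_⟩, hmind⟩, hdel⟩
    · rw [hL, hS, hBy, hA']
    · rw [hS, hBy, hB']
  by_cases hyA : y ∈ A
  · rw [if_pos hyA]
    have hyB : y ∉ B := Set.disjoint_left.mp hAB hyA
    have himg : (fun M : Matching (m+1) => delM M) ''
        {M | M ∈ MatClass (m+1) A B ∧ mind M = m + y} =
        MatClass m (A \ {y}) (B ∪ {y}) ∪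
          {M' | M' ∈ MatClass m A B ∧ y ∈ shRadj M' ∧ y ∉ B} := by
    -- forward by key; backward by constructions
      ext M'
      constructor
      · rintro ⟨M, hM, rfl⟩
        rcases (key M hM).1 with ⟨-, h⟩ | h
        · exact Or.inl h
        · exact Or.inr h
      · rintro (⟨hN', hA', hB'⟩ | hM')
        · have hys : y ∈ shB M' := by rw [hB']; exact Or.inr rfl
          obtain ⟨-, -, hyR⟩ := shB_sub_shRadj M' hys
          have p1 : 1 ≤ M'.closer y + 1 := by omega
          have p2 : M'.closer y + 1 ≤ 2*m+1 := by
            have := (cl_mem M' hy1 (by omega)).2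
            omega
          obtain ⟨hN, hdel, hmind, hL, hS⟩ := stats_ins_cl hm hN' hy1 hy2 hyR rfl p1 p2
          have hBset : (B ∪ {y}) \ {y} = B := by
            ext v
            simp only [Set.mem_diff, Set.mem_union, Set.mem_singleton_iff]
            constructor
            · rintro ⟨hv | hv, hne⟩
              · exact hv
              · exact absurd hv hne
            · intro hv
              exact ⟨Or.inl hv, fun he => hyB (he ▸ hv)⟩
          refine ⟨insM M' (M'.closer y + 1) p1 p2, ⟨⟨hN, ?_, ?_⟩, hmind⟩, hdel⟩
          · rw [hL, hS, hB', hBset]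
            ext v
            simp only [Set.mem_diff, Set.mem_singleton_iff]
            constructor
            · rintro ⟨hv, hnb⟩
              by_cases hve : v = y
              · exact hve ▸ hyA
              · have hvs : v ∉ shB M' := by
                  rw [hB']
                  rintro (h | h)
                  · exact hnb h
                  · exact hve h
                have hv2 : v ∈ A \ {y} := by rw [← hA']; exact ⟨hv, hvs⟩
                exact hv2.1
            · intro hv
              refine ⟨?_, fun hb => (Set.disjoint_left.mp hAB hv) hb⟩
              by_cases hve : v = y
              · exact hve ▸ (shB_sub_Lcr hN' hys)
              · have hv2 : v ∈ A \ {y} := ⟨hv, hve⟩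
                rw [← hA'] at hv2
                exact hv2.1
          · rw [hS, hB', hBset]
        · exact hback2 M' hM'
    have hdisj : Disjoint (MatClass m (A \ {y}) (B ∪ {y}))
        {M' | M' ∈ MatClass m A B ∧ y ∈ shRadj M' ∧ y ∉ B} := by
      rw [Set.disjoint_left]
      rintro M' ⟨-, -, hB1⟩ ⟨⟨-, -, hB2⟩, -, -⟩
      rw [hB2] at hB1
      exact hyB (by rw [hB1]; exact Or.inr rfl)
    rw [← Set.ncard_image_of_injOn hinj, himg,
      Set.ncard_union_eq hdisj (MatClass_finite m _ _) hfin2]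
  · rw [if_neg hyA, zero_add]
    have himg : (fun M : Matching (m+1) => delM M) ''
        {M | M ∈ MatClass (m+1) A B ∧ mind M = m + y} =
        {M' | M' ∈ MatClass m A B ∧ y ∈ shRadj M' ∧ y ∉ B} := by
      ext M'
      constructor
      · rintro ⟨M, hM, rfl⟩
        rcases (key M hM).1 with ⟨hy, -⟩ | h
        · exact absurd hy hyA
        · exact h
      · exact hback2 M'
    rw [← Set.ncard_image_of_injOn hinj, himg]

end MatSide8

section MatSide9

open Classical in
lemma mind_mem {m : ℕ} (hm : 1 ≤ m) {M : Matching (m+1)} (hM : M.NoLeftNesting) :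
    mind M < 2*m := by
  obtain ⟨o, ho1, ho2, hotop, hoge2, hN', hval, hins⟩ := mat_master hm hM
  unfold mind
  rw [hotop]
  by_cases h1 : o = 2*m+1
  · rw [if_pos h1]; omega
  · rw [if_neg h1]
    by_cases h2 : IsOp M (o-1)
    · rw [if_pos h2]
      obtain ⟨⟨ha1, ha2⟩, ha3⟩ := arcOp_spec h2
      have : arcOp M (o-1) ≠ m+1 := by
        intro he
        rw [he, hotop] at ha3
        omega
      omega
    · rw [if_neg h2]
      have hocl : IsCl M (o-1) := by
        rcases cover' M (p := o-1) (by omega) (by omega) with h | h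
        · exact absurd h h2
        · exact h
      obtain ⟨⟨ha1, ha2⟩, ha3⟩ := arcCl_spec hocl
      have hym : arcCl M (o-1) ≤ m := by
        by_contra hc
        have he : arcCl M (o-1) = m + 1 := by omega
        rw [he, closer_top M (by omega)] at ha3
        omega
      obtain ⟨c, ⟨hc1, hc2⟩, hce⟩ : ∃ c, (1 ≤ c ∧ c ≤ m) ∧ (delM M).closer c = o := by
        rcases hval with h | h
        · exact absurd h h1
        · exact h
      have hceM : M.closer c = o + 1 := by
        have h0 : delCl M c = o := hce
        rw [delCl_mid hc1 hc2, hotop] at h0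
        have := del_cl_ne M hc1 hc2
        rw [hotop] at this
        unfold shD at h0
        split_ifs at h0 <;> omega
      have hyc : arcCl M (o-1) < c := by
        by_contra hc'
        rcases Nat.eq_or_lt_of_le (Nat.le_of_not_lt hc') with h | h
        · rw [h] at hceM
          omega
        · have := M.closer_mono c (arcCl M (o-1)) hc1 h (by omega)
          omega
      omega

open Classical in
lemma mat_count (k : ℕ) (A B : Set ℕ)
    (hA : A ⊆ Set.Icc 1 (k+2)) (hAB : Disjoint A B)
    (hnA : k + 2 ∉ A) (hmA : k + 1 ∉ A) :
    (MatClass (k+2) A B).ncard =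
      (MatClass (k+1) A B).ncard * (1 + A.ncard)
      + (if k + 1 ∈ B then (MatClass (k+1) A (B \ {k+1})).ncard else 0)
      + ∑ x ∈ Finset.Icc 1 k, (if x ∈ A then (MatClass (k+1) (A \ {x}) B).ncard
          + (MatClass (k+1) (A \ {x}) (B ∪ {x})).ncard else 0) := by
  have hm : 1 ≤ k + 1 := by omega
  have hAsub : A ⊆ ↑(Finset.Icc 1 k) := by
    intro a ha
    have := hA ha
    rw [Set.mem_Icc] at this
    rw [Finset.coe_Icc, Set.mem_Icc]
    rcases Nat.lt_or_ge a (k+1) with h | h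
    · exact ⟨this.1, by omega⟩
    · exfalso
      rcases Nat.lt_or_ge a (k+2) with h2 | h2
      · exact hmA (by rwa [(show a = k + 1 by omega)] at ha)
      · exact hnA (by rwa [(show a = k + 2 by omega)] at ha)
  have hmem : ∀ M ∈ MatClass (k+2) A B, mind M ∈ Finset.range (2*k+2) := by
    intro M hM
    rw [Finset.mem_range]
    have := mind_mem hm hM.1
    omega
  rw [ncard_fiberwise (MatClass (k+2) A B) (MatClass_finite _ _ _)
    (Finset.range (2*k+2)) mind hmem]
  have hsplit : Finset.range (2*k+2) = insert 0 (Finset.Icc 1 (2*k+1)) := by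
    ext a
    simp only [Finset.mem_range, Finset.mem_insert, Finset.mem_Icc]
    omega
  rw [hsplit, Finset.sum_insert (by simp)]
  have hsplit2 : Finset.Icc 1 (2*k+1) = Finset.Icc 1 (k+1) ∪ Finset.Icc (k+2) (2*k+1) := by
    ext a
    simp only [Finset.mem_union, Finset.mem_Icc]
    omega
  rw [hsplit2, Finset.sum_union (by
    rw [Finset.disjoint_left]
    intro a ha hb
    rw [Finset.mem_Icc] at ha hb
    omega)]
  rw [Finset.sum_Icc_succ_top (show 1 ≤ k+1 by omega)]
  have hmap : Finset.Icc (k+2) (2*k+1) =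
      Finset.map (addLeftEmbedding (k+1)) (Finset.Icc 1 k) := by
    rw [Finset.map_add_left_Icc]
    congr 1 <;> omega
  rw [hmap, Finset.sum_map]
  rw [mbucket_zero hm A B, mbucket_op_top hm A B]
  have hop : ∀ x ∈ Finset.Icc 1 k,
      {M | M ∈ MatClass (k+1+1) A B ∧ mind M = x}.ncard =
        (if x ∈ A then (MatClass (k+1) (A \ {x}) B).ncard else 0) := by
    intro x hx
    rw [Finset.mem_Icc] at hx
    exact mbucket_op hm A B hAB hx.1 (by omega)
  have hcl : ∀ y ∈ Finset.Icc 1 k,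
      {M | M ∈ MatClass (k+1+1) A B ∧ mind M = addLeftEmbedding (k+1) y}.ncard =
        (if y ∈ A then (MatClass (k+1) (A \ {y}) (B ∪ {y})).ncard else 0) +
        {M' | M' ∈ MatClass (k+1) A B ∧ y ∈ shRadj M' ∧ y ∉ B}.ncard := by
    intro y hy
    rw [Finset.mem_Icc] at hy
    have : addLeftEmbedding (k+1) y = k + 1 + y := rfl
    rw [this]
    exact mbucket_cl hm A B hAB hy.1 (by omega)
  rw [Finset.sum_congr rfl hop, Finset.sum_congr rfl hcl, Finset.sum_add_distrib]
  have hfib : ∑ y ∈ Finset.Icc 1 k,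
      {M' | M' ∈ MatClass (k+1) A B ∧ y ∈ shRadj M' ∧ y ∉ B}.ncard =
      A.ncard * (MatClass (k+1) A B).ncard := by
    have := sum_ncard_fiber (MatClass (k+1) A B) (MatClass_finite _ _ _)
      (fun M' => {y | y ∈ shRadj M' ∧ y ∉ B}) (Finset.Icc 1 k)
      (by
        rintro M' hM' y ⟨hy, -⟩
        obtain ⟨h1, h2, -⟩ := hy
        rw [Finset.coe_Icc, Set.mem_Icc]
        exact ⟨h1, by omega⟩)
      A.ncard
      (fun M' hM' => pointwise_card hM')
    rw [← this]
    rfl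
  rw [hfib]
  have hcomb : ∑ x ∈ Finset.Icc 1 k,
      (if x ∈ A then (MatClass (k+1) (A \ {x}) B).ncard else 0) +
      ∑ x ∈ Finset.Icc 1 k,
      (if x ∈ A then (MatClass (k+1) (A \ {x}) (B ∪ {x})).ncard else 0) =
      ∑ x ∈ Finset.Icc 1 k, (if x ∈ A then (MatClass (k+1) (A \ {x}) B).ncard
          + (MatClass (k+1) (A \ {x}) (B ∪ {x})).ncard else 0) := by
    rw [← Finset.sum_add_distrib]
    refine Finset.sum_congr rfl fun x _ => ?_
    by_cases hxA : x ∈ A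
    · rw [if_pos hxA, if_pos hxA, if_pos hxA]
    · rw [if_neg hxA, if_neg hxA, if_neg hxA]
  rw [← hcomb]
  have : A.ncard * (MatClass (k+1) A B).ncard =
      (MatClass (k+1) A B).ncard * A.ncard := mul_comm _ _
  rw [this]
  ring
end MatSide9

section FinalSection

open Classical in
lemma PermClass_base (A B : Set ℕ) :
    (PermClass 1 A B).ncard = if A = ∅ ∧ B = ∅ then 1 else 0 := by
  have hstats : ∀ f : ℕ → ℕ, permAscBottomProper 1 f = ∅ ∧ shAdjExp 1 f = ∅ := by
    intro f
    constructor
    · ext v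
      simp only [permAscBottomProper, Set.mem_setOf_eq, Set.mem_empty_iff_false, iff_false]
      rintro ⟨j, h1, h2, -, -⟩
      omega
    · ext v
      simp only [shAdjExp, Set.mem_setOf_eq, Set.mem_empty_iff_false, iff_false]
      rintro ⟨j, h1, h2, -, -⟩
      omega
  by_cases h : A = ∅ ∧ B = ∅
  · rw [if_pos h]
    have hcl : PermClass 1 A B = {fun j => if j = 1 then 1 else 0} := by
      ext f
      rw [mem_PermClass_iff, Set.mem_singleton_iff]
      constructor
      · rintro ⟨hf, -, -⟩
        funext j
        by_cases hj : j = 1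
        · have := hf.val_mem (n := 1) (j := j) (by omega) (by omega)
          rw [hj, if_pos rfl]
          rw [hj] at this
          omega
        · rw [if_neg hj]
          exact hf.zero_out (by omega)
      · rintro rfl
        refine ⟨?_, (hstats _).1.trans h.1.symm, (hstats _).2.trans h.2.symm⟩
        constructor
        · refine ⟨?_, ?_, ?_⟩
          · intro j hj
            rw [Set.mem_Icc] at hj
            have hj1 : j = 1 := by omega
            rw [hj1]
            simp
          · intro j hj k hk he
            rw [Set.mem_Icc] at hj hk
            omega
          · intro v hv
            rw [Set.mem_Icc] at hv
            refine ⟨1, by rw [Set.mem_Icc]; omega, ?_⟩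
            show (if (1:ℕ) = 1 then 1 else 0) = v
            rw [if_pos rfl]
            omega
        · intro i hi
          rw [Set.mem_Icc] at hi
          show (if i = 1 then 1 else 0) = 0
          rw [if_neg (by omega)]
    rw [hcl, Set.ncard_singleton]
  · rw [if_neg h]
    have hcl : PermClass 1 A B = ∅ := by
      ext f
      simp only [Set.mem_empty_iff_false, iff_false]
      intro hf
      obtain ⟨hperm, hA, hB⟩ := mem_PermClass_iff.mp hf
      exact h ⟨by rw [← hA, (hstats f).1], by rw [← hB, (hstats f).2]⟩
    rw [hcl, Set.ncard_empty]

/-- The unique matching of size one. -/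
def M1 : Matching 1 where
  opener i := if i = 1 then 1 else 0
  closer i := if i = 1 then 2 else 0
  opener_lt_closer := by
    intro i h1 h2
    have h : i = 1 := by omega
    subst h
    show (if (1:ℕ) = 1 then 1 else 0) < (if (1:ℕ) = 1 then 2 else 0)
    norm_num
  closer_mono := by
    intro i j h1 h2 h3
    exact absurd h3 (by omega)
  opener_mem := by
    intro i h1 h2
    have h : i = 1 := by omega
    subst h
    show (if (1:ℕ) = 1 then 1 else 0) ∈ Set.Icc 1 (2*1)
    rw [if_pos rfl, Set.mem_Icc]
    omega
  closer_mem := by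
    intro i h1 h2
    have h : i = 1 := by omega
    subst h
    show (if (1:ℕ) = 1 then 2 else 0) ∈ Set.Icc 1 (2*1)
    rw [if_pos rfl, Set.mem_Icc]
    omega
  opener_inj := by
    intro i j h1 h2 h3 h4 he
    omega
  opener_ne_closer := by
    intro i j h1 h2 h3 h4
    have hi : i = 1 := by omega
    have hj : j = 1 := by omega
    subst hi
    subst hj
    show (if (1:ℕ) = 1 then 1 else 0) ≠ (if (1:ℕ) = 1 then 2 else 0)
    norm_num
  cover := by
    intro p hp
    rw [Set.mem_Icc] at hp
    refine ⟨1, le_refl 1, le_refl 1, ?_⟩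
    show (if (1:ℕ) = 1 then 1 else 0) = p ∨ (if (1:ℕ) = 1 then 2 else 0) = p
    rw [if_pos rfl, if_pos rfl]
    omega
  opener_eq_zero := by
    intro i hi
    rw [Set.mem_Icc] at hi
    show (if i = 1 then 1 else 0) = 0
    rw [if_neg (by omega)]
  closer_eq_zero := by
    intro i hi
    rw [Set.mem_Icc] at hi
    show (if i = 1 then 2 else 0) = 0
    rw [if_neg (by omega)]

open Classical in
lemma MatClass_base (A B : Set ℕ) :
    (MatClass 1 A B).ncard = if A = ∅ ∧ B = ∅ then 1 else 0 := by
  have hstats : ∀ M : Matching 1, M.LcrSet = ∅ ∧ shB M = ∅ := by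
    intro M
    constructor
    · ext i
      simp only [Matching.LcrSet, Set.mem_setOf_eq, Set.mem_empty_iff_false, iff_false]
      rintro ⟨h1, h2, j, hj1, hj2, hje, -, -⟩
      have hi : i = 1 := by omega
      have hj : j = 1 := by omega
      rw [hi] at hje
      rw [hj] at hje
      omega
    · ext y
      rw [shB_char]
      simp only [Set.mem_setOf_eq, Set.mem_empty_iff_false, iff_false]
      rintro ⟨h1, h2, -, -⟩
      omega
  have huniq : ∀ M : Matching 1, M = M1 := by
    intro M
    have h1 := op_mem M (le_refl 1) (le_refl 1)
    have h2 := cl_mem M (le_refl 1) (le_refl 1)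
    have h3 := M.opener_lt_closer 1 (le_refl 1) (le_refl 1)
    apply mat_ext <;> funext i <;> by_cases hi : i = 1
    · rw [hi]
      show M.opener 1 = if (1:ℕ) = 1 then 1 else 0
      rw [if_pos rfl]
      omega
    · show M.opener i = if i = 1 then 1 else 0
      rw [if_neg hi]
      exact M.opener_eq_zero i (by rw [Set.mem_Icc]; omega)
    · rw [hi]
      show M.closer 1 = if (1:ℕ) = 1 then 2 else 0
      rw [if_pos rfl]
      omega
    · show M.closer i = if i = 1 then 2 else 0
      rw [if_neg hi]
      exact M.closer_eq_zero i (by rw [Set.mem_Icc]; omega)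
  by_cases h : A = ∅ ∧ B = ∅
  · rw [if_pos h]
    have hcl : MatClass 1 A B = {M1} := by
      ext M
      rw [Set.mem_singleton_iff]
      constructor
      · intro _
        exact huniq M
      · rintro rfl
        refine ⟨?_, by rw [(hstats M1).1, (hstats M1).2, h.1]; simp,
          by rw [(hstats M1).2, h.2]⟩
        rintro i j hi1 hi2 hj1 hj2 ⟨hadj, -⟩
        have hi : i = 1 := by omega
        have hj : j = 1 := by omega
        rw [hi, hj] at hadj
        revert hadj
        show ¬ (M1.opener 1 = M1.opener 1 + 1)
        omega
    rw [hcl, Set.ncard_singleton]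
  · rw [if_neg h]
    have hcl : MatClass 1 A B = ∅ := by
      ext M
      simp only [Set.mem_empty_iff_false, iff_false]
      rintro ⟨-, hA, hB⟩
      exact h ⟨by rw [← hA, (hstats M).1, (hstats M).2]; simp, by rw [← hB, (hstats M).2]⟩
    rw [hcl, Set.ncard_empty]

lemma PermClass_empty {n : ℕ} {A B : Set ℕ}
    (h : (∃ v ∈ A, n < v + 2) ∨ (∃ v ∈ B, n < v + 1)) : PermClass n A B = ∅ := by
  ext f
  simp only [Set.mem_empty_iff_false, iff_false]
  intro hf
  obtain ⟨hperm, hA, hB⟩ := mem_PermClass_iff.mp hf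
  rcases h with ⟨v, hv, hlt⟩ | ⟨v, hv, hlt⟩
  · rw [← hA] at hv
    have := ABP_sub hperm v hv
    omega
  · rw [← hB] at hv
    have := shAdj_sub hperm v hv
    omega

lemma MatClass_empty {n : ℕ} {A B : Set ℕ} (hn : 2 ≤ n)
    (h : n ∈ A ∨ n ∈ B ∨ n - 1 ∈ A) : MatClass n A B = ∅ := by
  ext M
  simp only [Set.mem_empty_iff_false, iff_false]
  rintro ⟨hN, hA, hB⟩
  rcases h with h | h | h
  · rw [← hA] at h
    exact top_not_Lcr hN (by omega) h.1
  · rw [← hB] at h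
    have := Set.mem_Icc.mp (shB_sub_Icc M h)
    omega
  · rw [← hA] at h
    exact sub_top_not_A hN hn h

lemma main_counting : ∀ n : ℕ, 1 ≤ n → ∀ A B : Set ℕ, A ⊆ Set.Icc 1 n → B ⊆ Set.Icc 1 n →
    Disjoint A B → (PermClass n A B).ncard = (MatClass n A B).ncard := by
  intro n
  induction n using Nat.strong_induction_on with
  | _ n ih =>
    intro hn A B hA hB hAB
    rcases Nat.lt_or_ge n 2 with h2 | h2
    · have hn1 : n = 1 := by omega
      subst hn1
      rw [PermClass_base, MatClass_base]
    · obtain ⟨k, rfl⟩ : ∃ k, n = k + 2 := ⟨n - 2, by omega⟩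
      by_cases hdeg : (k+2) ∈ A ∨ (k+2) ∈ B ∨ (k+1) ∈ A
      · have hp : PermClass (k+2) A B = ∅ := by
          apply PermClass_empty
          rcases hdeg with h | h | h
          · exact Or.inl ⟨k+2, h, by omega⟩
          · exact Or.inr ⟨k+2, h, by omega⟩
          · exact Or.inl ⟨k+1, h, by omega⟩
        have hq : MatClass (k+2) A B = ∅ := by
          apply MatClass_empty (by omega)
          rcases hdeg with h | h | h
          · exact Or.inl h
          · exact Or.inr (Or.inl h)
          · refine Or.inr (Or.inr ?_)
            rw [(show k+2-1 = k+1 by omega)]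
            exact h
        rw [hp, hq, Set.ncard_empty, Set.ncard_empty]
      · push_neg at hdeg
        obtain ⟨hnA, hnB, hmA⟩ := hdeg
        have IH : ∀ A' B' : Set ℕ, A' ⊆ Set.Icc 1 (k+1) → B' ⊆ Set.Icc 1 (k+1) →
            Disjoint A' B' →
            (PermClass (k+1) A' B').ncard = (MatClass (k+1) A' B').ncard :=
          fun A' B' hA' hB' hAB' => ih (k+1) (by omega) (by omega) A' B' hA' hB' hAB'
        have hA1 : A ⊆ Set.Icc 1 (k+1) := by
          intro a ha
          have h0 := hA ha
          rw [Set.mem_Icc] at h0 ⊢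
          refine ⟨h0.1, ?_⟩
          by_contra hc
          push_neg at hc
          have he : a = k + 2 := by omega
          exact hnA (he ▸ ha)
        have hB1 : B ⊆ Set.Icc 1 (k+1) := by
          intro a ha
          have h0 := hB ha
          rw [Set.mem_Icc] at h0 ⊢
          refine ⟨h0.1, ?_⟩
          by_contra hc
          push_neg at hc
          have he : a = k + 2 := by omega
          exact hnB (he ▸ ha)
        rw [perm_count k A B hA hAB hnA hmA, mat_count k A B hA hAB hnA hmA]
        rw [IH A B hA1 hB1 hAB]
        congr 1
        · congr 1
          by_cases hb : k+1 ∈ B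
          · rw [if_pos hb, if_pos hb]
            apply IH
            · exact hA1
            · exact Set.diff_subset.trans hB1
            · exact hAB.mono_right Set.diff_subset
          · rw [if_neg hb, if_neg hb]
        · apply Finset.sum_congr rfl
          intro x hx
          rw [Finset.mem_Icc] at hx
          by_cases hxA : x ∈ A
          · rw [if_pos hxA, if_pos hxA]
            congr 1
            · apply IH
              · exact Set.diff_subset.trans hA1
              · exact hB1
              · exact hAB.mono_left Set.diff_subset
            · apply IH
              · exact Set.diff_subset.trans hA1
              · intro b hb
                rcases hb with hb | hb
                · exact hB1 hb
                · rw [Set.mem_singleton_iff] at hb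
                  rw [hb, Set.mem_Icc]
                  omega
              · rw [Set.disjoint_left]
                rintro a ⟨haA, hax⟩ (hb | hb)
                · exact Set.disjoint_left.mp hAB haA hb
                · exact hax hb
          · rw [if_neg hxA, if_neg hxA]

end FinalSection
/-- Position-refined equidistribution of long ascent bottoms and
(shifted) short ascents on permutations with single left crossings and (shifted)
double crossings on matchings without left nestings. -/
theorem ascbottoms_vs_leftcrossings (n : ℕ) (hn : 1 ≤ n) (A B : Set ℕ)
    (hA : A ⊆ Set.Icc 1 n) (hB : B ⊆ Set.Icc 1 n) (hAB : Disjoint A B) :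
    Set.ncard {f : ℕ → ℕ | IsPermOn n f ∧ permAscBottomProper n f = A ∧
        (fun a => a - 1) '' permAdjAsc n f = B} =
      Set.ncard {M : Matching n | M.NoLeftNesting ∧
        M.LcrSet \ (fun i => i - 1) '' M.LRcrSet = A ∧
        (fun i => i - 1) '' M.LRcrSet = B} := by
  show (PermClass n A B).ncard = (MatClass n A B).ncard
  exact main_counting n hn A B hA hB hAB
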